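/- arXiv:2007.05776 — 2 statements merged into one kernel-verified Lean document; each statement's English description precedes it below -/
import Mathlib

section
/- Let (D_x) be a subordinator with Laplace exponent φ and E_t=inf{u>0:D_u>t} its inverse, so that P(E_t>x)=P(D_x<t). Then for every p>0 and s>0, the Laplace transform of t↦E[E_t^p] is ∫₀^∞ e^{−st} E[E_t^p] dt = Γ(p+1) / ( s·[φ(s)]^p ). -/
open MeasureTheory ProbabilityTheory Filter

open scoped ENNReal NNReal

lemma aux_expInt {s : ℝ} (hs : 0 < s) (d : ℝ) :
    ∫⁻ t in Set.Ioi d, ENNReal.ofReal (Real.exp (-(s*t))) =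
      ENNReal.ofReal (Real.exp (-(s*d)) / s) := by
  have hi : IntegrableOn (fun t => Real.exp (-(s*t))) (Set.Ioi d) := by
    simpa [neg_mul] using exp_neg_integrableOn_Ioi d hs
  rw [← ofReal_integral_eq_lintegral_ofReal hi
      (Filter.Eventually.of_forall fun t => (Real.exp_pos _).le)]
  congr 1
  have := integral_comp_mul_left_Ioi (fun u => Real.exp (-u)) d hs
  simpa [smul_eq_mul, integral_exp_neg_Ioi, integral_exp_Iic, div_eq_inv_mul] using this

lemma aux_tail {Ω : Type*} [MeasureSpace Ω] [IsProbabilityMeasure (ℙ : Measure Ω)]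
    (f : Ω → ℝ) {r b : ℝ} (hr : 0 < r)
    (hlap : ∫ ω, Real.exp (-(r * f ω)) = Real.exp (-b)) (t : ℝ) :
    ℙ {ω | f ω < t} ≤ ENNReal.ofReal (Real.exp (r*t) * Real.exp (-b)) := by
  have hint : Integrable (fun ω => Real.exp (-(r * f ω))) ℙ := by
    by_contra h
    rw [integral_undef h] at hlap
    exact (Real.exp_pos _).ne' hlap.symm
  have hlint : ∫⁻ ω, ENNReal.ofReal (Real.exp (-(r * f ω))) ∂ℙ = ENNReal.ofReal (Real.exp (-b)) := by
    rw [← ofReal_integral_eq_lintegral_ofReal hint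
      (Filter.Eventually.of_forall fun ω => (Real.exp_pos _).le), hlap]
  have hm := mul_meas_ge_le_lintegral₀ (μ := ℙ)
    hint.aemeasurable.ennreal_ofReal (ENNReal.ofReal (Real.exp (-(r*t))))
  rw [hlint] at hm
  have hsub : {ω | f ω < t} ⊆
      {ω | ENNReal.ofReal (Real.exp (-(r*t))) ≤ ENNReal.ofReal (Real.exp (-(r * f ω)))} := by
    intro ω hω
    exact ENNReal.ofReal_le_ofReal (Real.exp_le_exp.2 (by nlinarith [Set.mem_setOf_eq ▸ hω]))
  have h1 : ℙ {ω | f ω < t} ≤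
      ENNReal.ofReal (Real.exp (-b)) / ENNReal.ofReal (Real.exp (-(r*t))) := by
    refine le_trans (measure_mono hsub) ?_
    rw [ENNReal.le_div_iff_mul_le (Or.inl (by simp [Real.exp_pos]))
      (Or.inl ENNReal.ofReal_ne_top)]
    rw [mul_comm] at hm
    exact hm
  refine h1.trans (le_of_eq ?_)
  rw [← ENNReal.ofReal_div_of_pos (Real.exp_pos _)]
  congr 1
  rw [Real.exp_neg (r*t)]
  field_simp

lemma aux_nonneg {Ω : Type*} [MeasureSpace Ω] [IsProbabilityMeasure (ℙ : Measure Ω)]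
    (f : Ω → ℝ)
    (h : ∀ n : ℕ, ∀ t : ℝ, ℙ {ω | f ω < t} ≤ ENNReal.ofReal (Real.exp (((n:ℝ)+1) * t))) :
    ∀ᵐ ω ∂ℙ, 0 ≤ f ω := by
  have key : ∀ ε > (0:ℝ), ℙ {ω | f ω < -ε} = 0 := by
    intro ε hε
    have hbound : ∀ n : ℕ, ℙ {ω | f ω < -ε} ≤ ENNReal.ofReal (Real.exp (-ε) ^ (n+1)) := by
      intro n
      refine (h n (-ε)).trans (le_of_eq ?_)
      congr 1
      rw [← Real.exp_nat_mul]
      push_cast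
      ring_nf
    have hlim : Filter.Tendsto (fun n : ℕ => ENNReal.ofReal (Real.exp (-ε) ^ (n+1)))
        atTop (nhds 0) := by
      rw [← ENNReal.ofReal_zero]
      apply ENNReal.tendsto_ofReal
      have h1 : Real.exp (-ε) < 1 := Real.exp_lt_one_iff.2 (by linarith)
      have := tendsto_pow_atTop_nhds_zero_of_lt_one (Real.exp_pos _).le h1
      exact this.comp (tendsto_add_atTop_nat 1)
    exact le_antisymm (ge_of_tendsto hlim (Filter.Eventually.of_forall hbound)) zero_le
  have hunion : {ω | f ω < 0} = ⋃ n : ℕ, {ω | f ω < -(1/((n:ℝ)+1))} := by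
    ext ω
    simp only [Set.mem_setOf_eq, Set.mem_iUnion]
    constructor
    · intro hω
      obtain ⟨n, hn⟩ := exists_nat_one_div_lt (neg_pos.2 hω)
      exact ⟨n, by linarith⟩
    · rintro ⟨n, hn⟩
      have : (0:ℝ) < 1/((n:ℝ)+1) := by positivity
      linarith
  rw [ae_iff]
  have : {ω | ¬ 0 ≤ f ω} = {ω | f ω < 0} := by ext ω; simp [not_le]
  rw [this, hunion]
  refine le_antisymm ((measure_iUnion_le _).trans ?_) zero_le
  have h0 : ∀ n : ℕ, ℙ {ω | f ω < -(1/((n:ℝ)+1))} = 0 := fun n => key _ (by positivity)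
  simp only [one_div] at h0
  simp [h0]

lemma aux_lapCDF {Ω : Type*} [MeasureSpace Ω] [IsProbabilityMeasure (ℙ : Measure Ω)]
    (f : Ω → ℝ) {s a : ℝ} (hs : 0 < s)
    (hlap : ∫ ω, Real.exp (-(s * f ω)) = Real.exp (-a))
    (hnn : ∀ᵐ ω ∂ℙ, 0 ≤ f ω) :
    ∫⁻ t in Set.Ioi (0:ℝ), ENNReal.ofReal (Real.exp (-(s*t))) * ℙ {ω | f ω < t}
      = ENNReal.ofReal (Real.exp (-a) / s) := by
  have hint : Integrable (fun ω => Real.exp (-(s * f ω))) ℙ := by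
    by_contra h
    rw [integral_undef h] at hlap
    exact (Real.exp_pos _).ne' hlap.symm
  -- a measurable version of f
  have hfm : AEMeasurable f ℙ := by
    have h1 : AEMeasurable (fun ω => Real.exp (-(s * f ω))) ℙ := hint.aemeasurable
    have h2 : AEMeasurable (fun ω => -Real.log (Real.exp (-(s * f ω))) / s) ℙ :=
      ((Real.measurable_log.comp_aemeasurable h1).neg).div_const s
    refine h2.congr (Filter.Eventually.of_forall fun ω => ?_)
    simp only [Real.log_exp]
    field_simp
  set g := hfm.mk f with hg
  have hgm : Measurable g := hfm.measurable_mk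
  have hfg : f =ᵐ[ℙ] g := hfm.ae_eq_mk
  have hset : ∀ t : ℝ, ℙ {ω | f ω < t} = ℙ {ω | g ω < t} := by
    intro t
    apply measure_congr
    rw [Filter.eventuallyEq_set]
    filter_upwards [hfg] with ω hω
    rw [hω]
  have hgnn : ∀ᵐ ω ∂ℙ, 0 ≤ g ω := by
    filter_upwards [hnn, hfg] with ω h1 h2
    rw [← h2]; exact h1
  simp_rw [hset]
  -- Tonelli
  have hswap :
      ∫⁻ t in Set.Ioi (0:ℝ), ENNReal.ofReal (Real.exp (-(s*t))) * ℙ {ω | g ω < t}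
        = ∫⁻ ω, (∫⁻ t in Set.Ioi (0:ℝ),
            ENNReal.ofReal (Real.exp (-(s*t))) *
              Set.indicator {ω' | g ω' < t} (fun _ => (1:ℝ≥0∞)) ω) ∂ℙ := by
    rw [← MeasureTheory.lintegral_lintegral_swap]
    · apply lintegral_congr
      intro t
      rw [lintegral_const_mul _ (measurable_const.indicator
        (show MeasurableSet {ω' | g ω' < t} from hgm measurableSet_Iio))]
      congr 1
      exact (lintegral_indicator_one
        (show MeasurableSet {ω' | g ω' < t} from hgm measurableSet_Iio)).symm
    · apply Measurable.aemeasurable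
      apply Measurable.mul
      · exact (ENNReal.measurable_ofReal.comp
          (Real.measurable_exp.comp ((measurable_fst.const_mul s).neg)))
      · have h3 : (fun z : ℝ × Ω => Set.indicator {ω' | g ω' < z.1} (fun _ => (1:ℝ≥0∞)) z.2)
            = Set.indicator {z : ℝ × Ω | g z.2 < z.1} (fun _ => (1:ℝ≥0∞)) := by
          ext z
          simp only [Set.indicator_apply, Set.mem_setOf_eq]
        have h4 : Measurable (fun z : ℝ × Ω =>
            Set.indicator {ω' | g ω' < z.1} (fun _ => (1:ℝ≥0∞)) z.2) := by
          rw [h3]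
          exact measurable_const.indicator
            (measurableSet_lt (hgm.comp measurable_snd) measurable_fst)
        exact h4
  rw [hswap]
  have hinner : ∀ᵐ ω ∂ℙ,
      (∫⁻ t in Set.Ioi (0:ℝ), ENNReal.ofReal (Real.exp (-(s*t))) *
        Set.indicator {ω' | g ω' < t} (fun _ => (1:ℝ≥0∞)) ω)
        = ENNReal.ofReal (Real.exp (-(s * g ω)) / s) := by
    filter_upwards [hgnn] with ω hω
    have h1 : (fun t => ENNReal.ofReal (Real.exp (-(s*t))) *
        Set.indicator {ω' | g ω' < t} (fun _ => (1:ℝ≥0∞)) ω)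
        = Set.indicator (Set.Ioi (g ω)) (fun t => ENNReal.ofReal (Real.exp (-(s*t)))) := by
      ext t
      by_cases h : g ω < t
      · simp [Set.indicator_apply, h, Set.mem_Ioi]
      · simp [Set.indicator_apply, h, Set.mem_Ioi]
    rw [h1, lintegral_indicator measurableSet_Ioi, Measure.restrict_restrict measurableSet_Ioi,
      Set.inter_eq_left.2 (Set.Ioi_subset_Ioi hω)]
    exact aux_expInt hs (g ω)
  rw [lintegral_congr_ae hinner]
  have hdiv : ∀ ω : Ω, ENNReal.ofReal (Real.exp (-(s * g ω)) / s)
      = ENNReal.ofReal (Real.exp (-(s * g ω))) * ENNReal.ofReal s⁻¹ := by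
    intro ω
    rw [← ENNReal.ofReal_mul (Real.exp_pos _).le, div_eq_mul_inv]
  simp_rw [hdiv]
  have hma : AEMeasurable (fun ω => ENNReal.ofReal (Real.exp (-(s * g ω)))) ℙ :=
    (((hgm.const_mul s).neg).exp).ennreal_ofReal.aemeasurable
  rw [lintegral_mul_const'' _ hma]
  have : ∫⁻ ω, ENNReal.ofReal (Real.exp (-(s * g ω))) ∂ℙ = ENNReal.ofReal (Real.exp (-a)) := by
      rw [← ofReal_integral_eq_lintegral_ofReal]
      · congr 1
        rw [← hlap]
        apply integral_congr_ae
        filter_upwards [hfg] with ω hω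
        rw [hω]
      · exact hint.congr (by filter_upwards [hfg] with ω hω; rw [hω])
      · exact Filter.Eventually.of_forall fun ω => (Real.exp_pos _).le
  rw [this, ← ENNReal.ofReal_mul (Real.exp_pos _).le, div_eq_mul_inv]


/-- Laplace transform of the moments of an inverse subordinator:
`∫₀^∞ e^{-st} E[E_t^p] dt = Γ(p+1)/(s φ(s)^p)`. -/
theorem laplace_transform_inverse_subordinator_moments
    {Ω : Type*} [MeasureSpace Ω] [IsProbabilityMeasure (ℙ : Measure Ω)]
    (D E : ℝ → Ω → ℝ) (φ : ℝ → ℝ)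
    (hmeasE : ∀ t > (0 : ℝ), Measurable (E t))
    (hEnonneg : ∀ t ω, 0 ≤ E t ω)
    (hφpos : ∀ s > 0, 0 < φ s)
    (hlap : ∀ s > 0, ∀ x ≥ (0 : ℝ),
      ∫ ω, Real.exp (-(s * D x ω)) = Real.exp (-(x * φ s)))
    (hinv : ∀ t > (0 : ℝ), ∀ x > (0 : ℝ),
      ℙ {ω | x < E t ω} = ℙ {ω | D x ω < t}) :
    ∀ p > (0 : ℝ), ∀ s > (0 : ℝ),
      ∫ t in Set.Ioi (0 : ℝ), Real.exp (-(s * t)) * ∫ ω, (E t ω) ^ p =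
        Real.Gamma (p + 1) / (s * (φ s) ^ p) := by
  intro p hp s hs
  set c := φ s with hcdef
  have hc : 0 < c := hφpos s hs
  -- tail bound
  have hTail : ∀ r > (0:ℝ), ∀ x ≥ (0:ℝ), ∀ t : ℝ,
      ℙ {ω | D x ω < t} ≤ ENNReal.ofReal (Real.exp (r*t) * Real.exp (-(x * φ r))) :=
    fun r hr x hx t => aux_tail (D x) hr (by rw [hlap r hr x hx]) t
  -- nonnegativity of D x
  have hDnn : ∀ x ≥ (0:ℝ), ∀ᵐ ω ∂ℙ, 0 ≤ D x ω := by
    intro x hx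
    apply aux_nonneg
    intro n t
    refine (hTail ((n:ℝ)+1) (by positivity) x hx t).trans ?_
    apply ENNReal.ofReal_le_ofReal
    have h1 : Real.exp (-(x * φ ((n:ℝ)+1))) ≤ 1 :=
      Real.exp_le_one_iff.2 (by nlinarith [hφpos ((n:ℝ)+1) (by positivity), hx])
    nlinarith [Real.exp_pos (((n:ℝ)+1) * t), Real.exp_pos (-(x * φ ((n:ℝ)+1)))]
  -- laplace of CDF
  have hlapCDF : ∀ x ≥ (0:ℝ),
      ∫⁻ t in Set.Ioi (0:ℝ), ENNReal.ofReal (Real.exp (-(s*t))) * ℙ {ω | D x ω < t}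
        = ENNReal.ofReal (Real.exp (-(x*c)) / s) :=
    fun x hx => aux_lapCDF (D x) hs (by rw [hlap s hs x hx]) (hDnn x hx)
  -- the jointly measurable tail function
  set g : ℚ → ℝ → ℝ≥0∞ := fun q x => ℙ {ω | x < E q ω} with hgdef
  have hganti : ∀ q, Antitone (g q) :=
    fun q x₁ x₂ h12 => measure_mono (fun ω hω => lt_of_le_of_lt h12 hω)
  set Q : ℝ × ℝ → ℝ≥0∞ :=
    fun z => ⨆ q : ℚ, if 0 < (q:ℝ) ∧ (q:ℝ) < z.2 then g q z.1 else 0 with hQdef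
  have hQmeas : Measurable Q := by
    apply Measurable.iSup
    intro q
    by_cases hq : 0 < (q:ℝ)
    · simp only [hq, true_and]
      exact Measurable.ite (measurable_snd measurableSet_Ioi)
        ((hganti q).measurable.comp measurable_fst) measurable_const
    · simp only [hq, false_and, if_false]
      exact measurable_const
  have hQeq : ∀ x > (0:ℝ), ∀ t > (0:ℝ), Q (x, t) = ℙ {ω | D x ω < t} := by
    intro x hx t ht
    set S : ℚ → Set Ω := fun q =>
      if 0 < (q:ℝ) ∧ (q:ℝ) < t then {ω | D x ω < (q:ℝ)} else ∅ with hSdef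
    have hScond : ∀ q : ℚ, (0 < (q:ℝ) ∧ (q:ℝ) < t) → S q = {ω | D x ω < (q:ℝ)} :=
      fun q h => if_pos h
    have hsub : ∀ q q' : ℚ, q ≤ q' → (0 < ((q':ℚ):ℝ) ∧ ((q':ℚ):ℝ) < t) → S q ⊆ S q' := by
      intro q q' hle hcond' ω hω
      simp only [hSdef] at hω ⊢
      rw [if_pos hcond']
      split_ifs at hω with hcond
      · have : D x ω < (q:ℝ) := hω
        exact lt_of_lt_of_le this (by exact_mod_cast hle)
      · exact absurd hω (Set.notMem_empty ω)
    have hdir : Directed (· ⊆ ·) S := by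
      intro q₁ q₂
      by_cases h1 : 0 < ((q₁:ℚ):ℝ) ∧ ((q₁:ℚ):ℝ) < t
      · by_cases h2 : 0 < ((q₂:ℚ):ℝ) ∧ ((q₂:ℚ):ℝ) < t
        · have hcondm : 0 < ((max q₁ q₂:ℚ):ℝ) ∧ ((max q₁ q₂:ℚ):ℝ) < t := by
            push_cast
            exact ⟨lt_max_of_lt_left h1.1, max_lt h1.2 h2.2⟩
          exact ⟨max q₁ q₂, hsub _ _ (le_max_left _ _) hcondm,
            hsub _ _ (le_max_right _ _) hcondm⟩
        · exact ⟨q₁, subset_rfl, by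
            simp only [hSdef]; rw [if_neg h2]; exact Set.empty_subset _⟩
      · exact ⟨q₂, by
          simp only [hSdef]; rw [if_neg h1]; exact Set.empty_subset _, subset_rfl⟩
    have hunion : (⋃ q, S q) = {ω | D x ω < t} := by
      ext ω
      simp only [Set.mem_iUnion, hSdef]
      constructor
      · rintro ⟨q, hq⟩
        split_ifs at hq with h
        · exact Set.mem_setOf_eq ▸ lt_trans hq h.2
        · exact absurd hq (Set.notMem_empty ω)
      · intro hω
        obtain ⟨q, hq1, hq2⟩ := exists_rat_btwn (show max (D x ω) 0 < t from max_lt hω ht)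
        refine ⟨q, ?_⟩
        rw [if_pos ⟨lt_of_le_of_lt (le_max_right _ _) hq1, hq2⟩]
        exact lt_of_le_of_lt (le_max_left _ _) hq1
    have hmeasU := hdir.measure_iUnion (μ := (ℙ : Measure Ω))
    rw [hunion] at hmeasU
    rw [hmeasU, hQdef]
    apply iSup_congr
    intro q
    by_cases h : 0 < (q:ℝ) ∧ (q:ℝ) < t
    · rw [if_pos h, hSdef]
      simp only [if_pos h]
      exact hinv (q:ℝ) h.1 x hx
    · rw [if_neg h, hSdef]
      simp only [if_neg h, measure_empty]
  -- layer cake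
  have hrpowm : Measurable (fun x : ℝ => x ^ (p-1)) := measurable_id.pow measurable_const
  have hJ : ∀ t > (0:ℝ), ∫⁻ ω, ENNReal.ofReal ((E t ω) ^ p) ∂ℙ
      = ENNReal.ofReal p * ∫⁻ x in Set.Ioi (0:ℝ), Q (x, t) * ENNReal.ofReal (x ^ (p-1)) := by
    intro t ht
    rw [MeasureTheory.lintegral_rpow_eq_lintegral_meas_lt_mul ℙ
      (Filter.Eventually.of_forall (hEnonneg t)) (hmeasE t ht).aemeasurable hp]
    congr 1
    refine setLIntegral_congr_fun measurableSet_Ioi ?_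
    exact fun x hx => by
      rw [hinv t ht x hx, ← hQeq x hx t ht]
  -- integrability of the Gamma-type integrand
  have hGint : IntegrableOn (fun x : ℝ => x ^ (p-1) * Real.exp (-(c*x))) (Set.Ioi 0) := by
    have h := integrableOn_rpow_mul_exp_neg_mul_rpow
      (by linarith : (-1:ℝ) < p - 1) (by norm_num : (0:ℝ) < 1) hc
    refine h.congr_fun (fun x hx => ?_) measurableSet_Ioi
    beta_reduce
    rw [Real.rpow_one, neg_mul]
  have hGnn : 0 ≤ᵐ[volume.restrict (Set.Ioi (0:ℝ))]
      fun x : ℝ => x ^ (p-1) * Real.exp (-(c*x)) := by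
    filter_upwards [self_mem_ae_restrict
      (measurableSet_Ioi : MeasurableSet (Set.Ioi (0:ℝ)))] with x hx
    have hx' : (0:ℝ) < x := hx
    positivity
  have hGfin : ∫⁻ x in Set.Ioi (0:ℝ), ENNReal.ofReal (x ^ (p-1) * Real.exp (-(c*x))) ≠ ⊤ := by
    rw [← ofReal_integral_eq_lintegral_ofReal hGint hGnn]
    exact ENNReal.ofReal_ne_top
  have hbound : ∀ t > (0:ℝ),
      (∫⁻ x in Set.Ioi (0:ℝ), Q (x, t) * ENNReal.ofReal (x ^ (p-1))) < ⊤ := by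
    intro t ht
    have hle : (∫⁻ x in Set.Ioi (0:ℝ), Q (x, t) * ENNReal.ofReal (x ^ (p-1)))
        ≤ ∫⁻ x in Set.Ioi (0:ℝ), ENNReal.ofReal (Real.exp (s*t)) *
            ENNReal.ofReal (x ^ (p-1) * Real.exp (-(c*x))) := by
      refine lintegral_mono_ae ?_
      filter_upwards [self_mem_ae_restrict
        (measurableSet_Ioi : MeasurableSet (Set.Ioi (0:ℝ)))] with x hx
      have hx' : (0:ℝ) < x := hx
      rw [hQeq x hx' t ht]
      refine le_trans (mul_le_mul_left (hTail s hs x hx'.le t) _) (le_of_eq ?_)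
      rw [← ENNReal.ofReal_mul (by positivity), ← ENNReal.ofReal_mul (by positivity)]
      congr 1
      rw [mul_comm x c]
      ring
    refine hle.trans_lt ?_
    rw [lintegral_const_mul' _ _ ENNReal.ofReal_ne_top]
    exact ENNReal.mul_lt_top ENNReal.ofReal_lt_top hGfin.lt_top
  -- push constants inside
  have hpush : ∀ t : ℝ, ENNReal.ofReal (Real.exp (-(s*t))) *
      (ENNReal.ofReal p * ∫⁻ x in Set.Ioi (0:ℝ), Q (x, t) * ENNReal.ofReal (x ^ (p-1)))
      = ∫⁻ x in Set.Ioi (0:ℝ), ENNReal.ofReal (Real.exp (-(s*t))) *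
          (ENNReal.ofReal p * (Q (x, t) * ENNReal.ofReal (x ^ (p-1)))) := by
    intro t
    rw [lintegral_const_mul' (ENNReal.ofReal (Real.exp (-(s*t)))) _ ENNReal.ofReal_ne_top,
        lintegral_const_mul' (ENNReal.ofReal p) _ ENNReal.ofReal_ne_top]
  -- inner t-integral
  have hinner2 : ∀ x > (0:ℝ), (∫⁻ t in Set.Ioi (0:ℝ), ENNReal.ofReal (Real.exp (-(s*t))) *
      (ENNReal.ofReal p * (Q (x, t) * ENNReal.ofReal (x ^ (p-1)))))
      = (ENNReal.ofReal p * ENNReal.ofReal (x ^ (p-1))) *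
          ENNReal.ofReal (Real.exp (-(x*c)) / s) := by
    intro x hx
    have h1 : ∀ t : ℝ, ENNReal.ofReal (Real.exp (-(s*t))) *
        (ENNReal.ofReal p * (Q (x, t) * ENNReal.ofReal (x ^ (p-1))))
        = (ENNReal.ofReal p * ENNReal.ofReal (x ^ (p-1))) *
            (ENNReal.ofReal (Real.exp (-(s*t))) * Q (x, t)) := by
      intro t; ring
    simp_rw [h1]
    rw [lintegral_const_mul' _ _
      (ENNReal.mul_ne_top ENNReal.ofReal_ne_top ENNReal.ofReal_ne_top)]
    congr 1
    rw [← hlapCDF x hx.le]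
    refine setLIntegral_congr_fun measurableSet_Ioi ?_
    exact fun t ht => by rw [hQeq x hx t ht]
  -- value of the x-integral
  have hKval : (∫⁻ x in Set.Ioi (0:ℝ), (ENNReal.ofReal p * ENNReal.ofReal (x ^ (p-1))) *
      ENNReal.ofReal (Real.exp (-(x*c)) / s))
      = ENNReal.ofReal (Real.Gamma (p+1) / (s * c ^ p)) := by
    have h1 : ∀ x ∈ Set.Ioi (0:ℝ), (ENNReal.ofReal p * ENNReal.ofReal (x ^ (p-1))) *
        ENNReal.ofReal (Real.exp (-(x*c)) / s)
        = ENNReal.ofReal p * ENNReal.ofReal (x ^ (p-1) * Real.exp (-(c*x)) / s) := by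
      intro x hx
      rw [mul_assoc, ← ENNReal.ofReal_mul (Real.rpow_nonneg (le_of_lt hx) _)]
      congr 2
      rw [mul_comm x c]
      ring
    rw [setLIntegral_congr_fun measurableSet_Ioi h1,
       lintegral_const_mul' _ _ ENNReal.ofReal_ne_top,
       ← ofReal_integral_eq_lintegral_ofReal (hGint.div_const s) ?_]
    · rw [integral_div, Real.integral_rpow_mul_exp_neg_mul_Ioi hp hc,
        ← ENNReal.ofReal_mul hp.le]
      congr 1
      rw [Real.Gamma_add_one hp.ne', one_div, Real.inv_rpow hc.le]
      have hcp : (0:ℝ) < c ^ p := Real.rpow_pos_of_pos hc p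
      field_simp
    · filter_upwards [self_mem_ae_restrict
        (measurableSet_Ioi : MeasurableSet (Set.Ioi (0:ℝ)))] with x hx
      have hx' : (0:ℝ) < x := hx
      positivity
  -- the full double integral
  have hK : (∫⁻ t in Set.Ioi (0:ℝ), ENNReal.ofReal (Real.exp (-(s*t))) *
      (ENNReal.ofReal p * ∫⁻ x in Set.Ioi (0:ℝ), Q (x, t) * ENNReal.ofReal (x ^ (p-1))))
      = ENNReal.ofReal (Real.Gamma (p+1) / (s * c ^ p)) := by
    have hmeasF : AEMeasurable (Function.uncurry fun (t x : ℝ) =>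
        ENNReal.ofReal (Real.exp (-(s*t))) *
          (ENNReal.ofReal p * (Q (x, t) * ENNReal.ofReal (x ^ (p-1)))))
        ((volume.restrict (Set.Ioi (0:ℝ))).prod (volume.restrict (Set.Ioi (0:ℝ)))) := by
      apply Measurable.aemeasurable
      apply Measurable.mul
      · exact ENNReal.measurable_ofReal.comp
          (Real.measurable_exp.comp ((measurable_fst.const_mul s).neg))
      · apply Measurable.mul measurable_const
        apply Measurable.mul
        · exact hQmeas.comp (measurable_snd.prodMk measurable_fst)
        · exact ENNReal.measurable_ofReal.comp (hrpowm.comp measurable_snd)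
    calc (∫⁻ t in Set.Ioi (0:ℝ), ENNReal.ofReal (Real.exp (-(s*t))) *
        (ENNReal.ofReal p * ∫⁻ x in Set.Ioi (0:ℝ), Q (x, t) * ENNReal.ofReal (x ^ (p-1))))
        = ∫⁻ t in Set.Ioi (0:ℝ), (∫⁻ x in Set.Ioi (0:ℝ),
            ENNReal.ofReal (Real.exp (-(s*t))) *
              (ENNReal.ofReal p * (Q (x, t) * ENNReal.ofReal (x ^ (p-1))))) := by
          exact lintegral_congr fun t => hpush t
      _ = ∫⁻ x in Set.Ioi (0:ℝ), (∫⁻ t in Set.Ioi (0:ℝ),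
            ENNReal.ofReal (Real.exp (-(s*t))) *
              (ENNReal.ofReal p * (Q (x, t) * ENNReal.ofReal (x ^ (p-1))))) :=
          MeasureTheory.lintegral_lintegral_swap hmeasF
      _ = ∫⁻ x in Set.Ioi (0:ℝ), (ENNReal.ofReal p * ENNReal.ofReal (x ^ (p-1))) *
            ENNReal.ofReal (Real.exp (-(x*c)) / s) := by
          refine setLIntegral_congr_fun measurableSet_Ioi ?_
          exact fun x hx => hinner2 x hx
      _ = ENNReal.ofReal (Real.Gamma (p+1) / (s * c ^ p)) := hKval
  -- final assembly
  have hQm2 : Measurable (fun t : ℝ =>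
      ∫⁻ x in Set.Ioi (0:ℝ), Q (x, t) * ENNReal.ofReal (x ^ (p-1))) := by
    apply Measurable.lintegral_prod_right'
      (f := fun z : ℝ × ℝ => Q (z.2, z.1) * ENNReal.ofReal (z.2 ^ (p-1)))
    exact (hQmeas.comp (measurable_snd.prodMk measurable_fst)).mul
      (ENNReal.measurable_ofReal.comp (hrpowm.comp measurable_snd))
  have hEq1 : Set.EqOn (fun t => Real.exp (-(s*t)) * ∫ ω, (E t ω) ^ p)
      (fun t => (ENNReal.ofReal (Real.exp (-(s*t))) *
        (ENNReal.ofReal p *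
          ∫⁻ x in Set.Ioi (0:ℝ), Q (x, t) * ENNReal.ofReal (x ^ (p-1)))).toReal)
      (Set.Ioi (0:ℝ)) := by
    intro t ht
    have ht' : (0:ℝ) < t := ht
    have hmeaspow : Measurable (fun ω => (E t ω) ^ p) :=
      (Real.continuous_rpow_const hp.le).measurable.comp (hmeasE t ht')
    have h1 : ∫ ω, (E t ω) ^ p = (∫⁻ ω, ENNReal.ofReal ((E t ω) ^ p) ∂ℙ).toReal :=
      integral_eq_lintegral_of_nonneg_ae
        (Filter.Eventually.of_forall fun ω => Real.rpow_nonneg (hEnonneg t ω) p)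
        hmeaspow.aestronglyMeasurable
    simp only
    rw [h1, hJ t ht']
    simp only [ENNReal.toReal_mul]
    rw [ENNReal.toReal_ofReal (Real.exp_nonneg _)]
  rw [setIntegral_congr_fun measurableSet_Ioi hEq1]
  rw [integral_toReal ?_ ?_]
  · rw [hK, ENNReal.toReal_ofReal]
    refine div_nonneg (Real.Gamma_nonneg_of_nonneg (by linarith)) ?_
    exact mul_nonneg hs.le (Real.rpow_pos_of_pos hc p).le
  · apply Measurable.aemeasurable
    exact (ENNReal.measurable_ofReal.comp
      (Real.measurable_exp.comp ((measurable_id.const_mul s).neg))).mul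
      (measurable_const.mul hQm2)
  · filter_upwards [self_mem_ae_restrict
      (measurableSet_Ioi : MeasurableSet (Set.Ioi (0:ℝ)))] with t ht
    have ht' : (0:ℝ) < t := ht
    exact ENNReal.mul_lt_top ENNReal.ofReal_lt_top
      (ENNReal.mul_lt_top ENNReal.ofReal_lt_top (hbound t ht'))
end

section
/- Let Ω be a bounded open set in ℝ^d, (W_t) a Brownian motion in ℝ^d independent of a subordinator (D_t) with infinite Lévy measure (hence strictly increasing paths). Define Q̃(t) = ∫_Ω P_x(τ_Ω^W > sup_{0≤s≤t} D_s) dx, where τ_Ω^W is the first exit time of W from Ω. Then t ↦ Q̃(t) is continuous on (0,∞). -/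
open MeasureTheory ProbabilityTheory Filter Set Metric Topology
open scoped ENNReal NNReal

namespace SHCAux
variable {d : ℕ} {Ω₁ : Type*}

lemma exists_rat_near {a b u ε : ℝ} (hab : a < b) (hu : u ∈ Icc a b) (hε : 0 < ε) :
    ∃ r : ℚ, (r : ℝ) ∈ Icc a b ∧ |(r : ℝ) - u| < ε := by
  rcases lt_or_eq_of_le hu.2 with h | h
  · obtain ⟨r, hr1, hr2⟩ := exists_rat_btwn (lt_min h (lt_add_of_pos_right u hε))
    exact ⟨r, ⟨le_trans hu.1 hr1.le, le_of_lt (lt_of_lt_of_le hr2 (min_le_left _ _))⟩,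
      abs_sub_lt_iff.2 ⟨by linarith [lt_of_lt_of_le hr2 (min_le_right _ _)], by linarith⟩⟩
  · obtain ⟨r, hr1, hr2⟩ := exists_rat_btwn (show max a (b - ε) < b by
      rcases max_cases a (b - ε) with ⟨h1, h2⟩ | ⟨h1, h2⟩ <;> rw [h1] <;> linarith)
    refine ⟨r, ⟨le_trans (le_max_left _ _) hr1.le, hr2.le⟩, ?_⟩
    have := lt_of_le_of_lt (le_max_right a (b - ε)) hr1
    rw [abs_sub_lt_iff]; constructor <;> linarith

lemma le_on_Icc_of_rat {f : ℝ → ℝ} (hf : Continuous f) {a b δ : ℝ} (hab : a < b)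
    (h : ∀ r : ℚ, (r : ℝ) ∈ Icc a b → δ ≤ f r) : ∀ u ∈ Icc a b, δ ≤ f u := by
  intro u hu
  have hcl : IsClosed {v : ℝ | v ∈ Icc a b ∧ δ ≤ f v} :=
    isClosed_Icc.inter (isClosed_le continuous_const hf)
  have : u ∈ closure {v : ℝ | v ∈ Icc a b ∧ δ ≤ f v} := by
    rw [Metric.mem_closure_iff]
    intro ε hε
    obtain ⟨r, hr, hd⟩ := exists_rat_near hab hu hε
    exact ⟨r, ⟨hr, h r hr⟩, by rw [Real.dist_eq, abs_sub_comm]; exact hd⟩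
  exact (hcl.closure_eq ▸ this).2

/-- exit time (Lean junk-value convention: `sInf ∅ = 0`) -/
noncomputable def tau (O : Set (EuclideanSpace ℝ (Fin d))) (W : ℝ → Ω₁ → EuclideanSpace ℝ (Fin d))
    (x : EuclideanSpace ℝ (Fin d)) (ω₁ : Ω₁) : ℝ :=
  sInf {u : ℝ | 0 < u ∧ x + W u ω₁ ∉ O}

def StaySet (O : Set (EuclideanSpace ℝ (Fin d))) (W : ℝ → Ω₁ → EuclideanSpace ℝ (Fin d))
    (x : EuclideanSpace ℝ (Fin d)) (q : ℚ) : Set Ω₁ :=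
  ⋂ (n : ℕ), ⋃ (δ : ℚ), ⋃ (_ : 0 < δ), ⋂ (r : ℚ), ⋂ (_ : (r : ℝ) ∈ Icc ((q : ℝ)/(n+2)) q),
    {ω₁ | (δ : ℝ) ≤ infDist (x + W r ω₁) Oᶜ}

def ExitSet (O : Set (EuclideanSpace ℝ (Fin d))) (W : ℝ → Ω₁ → EuclideanSpace ℝ (Fin d))
    (x : EuclideanSpace ℝ (Fin d)) : Set Ω₁ :=
  ⋃ (n : ℕ), ⋂ (δ : ℚ), ⋂ (_ : 0 < δ), ⋃ (r : ℚ), ⋃ (_ : (r : ℝ) ∈ Icc (1/(n+1) : ℝ) (n+2)),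
    {ω₁ | infDist (x + W r ω₁) Oᶜ < δ}

variable {O : Set (EuclideanSpace ℝ (Fin d))} {W : ℝ → Ω₁ → EuclideanSpace ℝ (Fin d)}
  {x : EuclideanSpace ℝ (Fin d)} {ω₁ : Ω₁}

lemma mem_O_iff (hO : IsOpen O) (hOc : Oᶜ.Nonempty) {y : EuclideanSpace ℝ (Fin d)} :
    y ∈ O ↔ 0 < infDist y Oᶜ := by
  rw [← (hO.isClosed_compl.notMem_iff_infDist_pos hOc)]
  simp [not_not]

section char
variable (hO : IsOpen O) (hOc : Oᶜ.Nonempty) (hcont : Continuous (fun u => W u ω₁))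

omit hO hOc in
include hcont in
lemma continuous_phi : Continuous (fun u => infDist (x + W u ω₁) Oᶜ) :=
  (continuous_infDist_pt Oᶜ).comp (continuous_const.add hcont)

include hO hOc hcont

lemma mem_StaySet_iff {q : ℚ} (hq : 0 < q) :
    ω₁ ∈ StaySet O W x q ↔ ∀ u ∈ Ioc (0:ℝ) q, x + W u ω₁ ∈ O := by
  have hf := continuous_phi (x := x) (O := O) hcont
  have hq' : (0:ℝ) < q := by exact_mod_cast hq
  constructor
  · intro h u hu
    obtain ⟨n, hn⟩ := exists_nat_ge ((q : ℝ) / u)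
    have hu0 : 0 < u := hu.1
    have hbd : (q : ℝ)/(n+2) ≤ u := by
      rw [div_le_iff₀ (by positivity)]
      have h2 : (q : ℝ) / u ≤ n + 2 := by linarith
      calc (q:ℝ) = (q/u) * u := by field_simp
      _ ≤ (n+2) * u := by nlinarith
      _ = u * (n+2) := by ring
    have hmem := mem_iInter.1 h n
    simp only [mem_iUnion] at hmem
    obtain ⟨δ, hδ, hδ'⟩ := hmem
    have h1 : ∀ r : ℚ, (r:ℝ) ∈ Icc ((q:ℝ)/(n+2)) q → (δ:ℝ) ≤ infDist (x + W r ω₁) Oᶜ :=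
      fun r hr => mem_iInter.1 (mem_iInter.1 hδ' r) hr
    have hab : (q:ℝ)/(n+2) < q := by
      rw [div_lt_iff₀ (by positivity)]; nlinarith
    have := le_on_Icc_of_rat hf hab h1 u ⟨hbd, hu.2⟩
    rw [mem_O_iff hO hOc]
    calc (0:ℝ) < δ := by exact_mod_cast hδ
    _ ≤ _ := this
  · intro h
    rw [StaySet, mem_iInter]
    intro n
    have hab : (q:ℝ)/(n+2) < q := by rw [div_lt_iff₀ (by positivity)]; nlinarith
    have hne : ((q:ℝ)/(n+2)) ∈ Icc ((q:ℝ)/(n+2)) (q:ℝ) := ⟨le_refl _, hab.le⟩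
    obtain ⟨u₀, hu₀, hmin⟩ := isCompact_Icc.exists_isMinOn ⟨_, hne⟩ hf.continuousOn
    have hu₀' : u₀ ∈ Ioc (0:ℝ) q := ⟨lt_of_lt_of_le (by positivity) hu₀.1, hu₀.2⟩
    have hpos : 0 < infDist (x + W u₀ ω₁) Oᶜ := (mem_O_iff hO hOc).1 (h u₀ hu₀')
    obtain ⟨δ, hδ1, hδ2⟩ := exists_rat_btwn hpos
    simp only [mem_iUnion]
    refine ⟨δ, by exact_mod_cast hδ1, ?_⟩
    rw [mem_iInter]
    intro r
    rw [mem_iInter]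
    intro hr
    exact le_trans hδ2.le (hmin hr)

lemma mem_ExitSet_iff :
    ω₁ ∈ ExitSet O W x ↔ ∃ u : ℝ, 0 < u ∧ x + W u ω₁ ∉ O := by
  have hf := continuous_phi (x := x) (O := O) hcont
  constructor
  · intro h
    simp only [ExitSet, mem_iUnion, mem_iInter] at h
    obtain ⟨n, hn⟩ := h
    have hseq : ∀ k : ℕ, ∃ r : ℝ, r ∈ Icc (1/(n+1):ℝ) (n+2:ℝ) ∧
        infDist (x + W r ω₁) Oᶜ < 1/(k+1) := by
      intro k
      have hpos : (0:ℚ) < 1/(k+1) := by positivity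
      have := hn (1/(k+1)) hpos
      obtain ⟨r, hr, hr2⟩ := this
      refine ⟨r, hr, lt_of_lt_of_le hr2 ?_⟩
      rw [Rat.cast_div]
      push_cast
      norm_num
    choose r hr1 hr2 using hseq
    obtain ⟨u, hu, φ, hφmono, hφ⟩ := isCompact_Icc.tendsto_subseq hr1
    have h0 : Tendsto (fun k => infDist (x + W (r (φ k)) ω₁) Oᶜ) atTop
        (𝓝 (infDist (x + W u ω₁) Oᶜ)) := (hf.tendsto u).comp hφ
    have hlim : Tendsto (fun k : ℕ => (1:ℝ)/(k+1)) atTop (𝓝 0) :=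
      tendsto_one_div_add_atTop_nhds_zero_nat
    have hle : infDist (x + W u ω₁) Oᶜ ≤ 0 := by
      refine le_of_tendsto_of_tendsto h0 hlim (Filter.Eventually.of_forall fun k => ?_)
      refine le_trans (hr2 (φ k)).le ?_
      apply one_div_le_one_div_of_le (by positivity)
      have : (k:ℝ) ≤ (φ k : ℝ) := by exact_mod_cast Nat.cast_le.2 hφmono.le_apply
      linarith
    have heq : infDist (x + W u ω₁) Oᶜ = 0 := le_antisymm hle infDist_nonneg
    have humem : x + W u ω₁ ∈ Oᶜ :=
      (hO.isClosed_compl.mem_iff_infDist_zero hOc).2 heq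
    exact ⟨u, lt_of_lt_of_le (by positivity) hu.1, humem⟩
  · rintro ⟨u, hu0, hmem⟩
    have hfu : infDist (x + W u ω₁) Oᶜ = 0 := infDist_zero_of_mem hmem
    obtain ⟨n, hn⟩ := exists_nat_ge (max u (1/u))
    have hu1 : u ≤ (n:ℝ) + 2 := le_trans (le_max_left _ _) (by linarith)
    have hu2 : (1:ℝ)/(n+1) ≤ u := by
      rw [div_le_iff₀ (by positivity)]
      have h1 : 1/u ≤ (n:ℝ) := le_trans (le_max_right _ _) hn
      have : (1:ℝ) = (1/u) * u := by field_simp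
      rw [this]
      nlinarith
    simp only [ExitSet, mem_iUnion, mem_iInter]
    refine ⟨n, fun δ hδ => ?_⟩
    have hδ' : (0:ℝ) < δ := by exact_mod_cast hδ
    have hcont_at := Metric.continuous_iff.1 hf u δ hδ'
    obtain ⟨ε, hε, hball⟩ := hcont_at
    have hab : (1/(n+1):ℝ) < (n:ℝ)+2 := by
      have h1 : (1:ℝ)/(n+1) ≤ 1 := by
        rw [div_le_one (by positivity)]; linarith [Nat.cast_nonneg (α := ℝ) n]
      linarith [Nat.cast_nonneg (α := ℝ) n]
    obtain ⟨rr, hrr, hrrd⟩ := exists_rat_near hab ⟨hu2, hu1⟩ hε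
    refine ⟨rr, hrr, ?_⟩
    have := hball (rr:ℝ) (by rw [Real.dist_eq]; exact hrrd)
    rw [Real.dist_eq, hfu, sub_zero, abs_of_nonneg infDist_nonneg] at this
    exact this


include hO hOc hcont in
lemma tau_gt_iff {q : ℚ} (hq : 0 < q) :
    (q : ℝ) < tau O W x ω₁ ↔ ω₁ ∈ StaySet O W x q ∩ ExitSet O W x := by
  have hq' : (0:ℝ) < q := by exact_mod_cast hq
  set Es := {u : ℝ | 0 < u ∧ x + W u ω₁ ∉ O} with hEs
  have hbd : BddBelow Es := ⟨0, fun e he => he.1.le⟩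
  constructor
  · intro hgt
    have hne : Es.Nonempty := by
      by_contra hcon
      rw [not_nonempty_iff_eq_empty] at hcon
      rw [tau, ← hEs, hcon, Real.sInf_empty] at hgt
      linarith
    constructor
    · rw [mem_StaySet_iff hO hOc hcont hq]
      intro u hu
      by_contra hnot
      have : u ∈ Es := ⟨hu.1, hnot⟩
      have := csInf_le hbd this
      rw [tau, ← hEs] at hgt
      linarith [hu.2]
    · rw [mem_ExitSet_iff hO hOc hcont]
      obtain ⟨e, he⟩ := hne
      exact ⟨e, he.1, he.2⟩
  · rintro ⟨hstay, hexit⟩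
    rw [mem_StaySet_iff hO hOc hcont hq] at hstay
    rw [mem_ExitSet_iff hO hOc hcont] at hexit
    obtain ⟨e₀, he₀⟩ := hexit
    have hne : Es.Nonempty := ⟨e₀, he₀⟩
    -- positivity of infDist at q
    have hwq : x + W (q:ℝ) ω₁ ∈ O := hstay (q:ℝ) ⟨hq', le_refl _⟩
    have hpos : 0 < infDist (x + W (q:ℝ) ω₁) Oᶜ := (mem_O_iff hO hOc).1 hwq
    have hf := continuous_phi (x := x) (O := O) hcont
    obtain ⟨ε, hε, hball⟩ := Metric.continuous_iff.1 hf (q:ℝ)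
      (infDist (x + W (q:ℝ) ω₁) Oᶜ) hpos
    have hkey : ∀ e ∈ Es, (q:ℝ) + ε/2 ≤ e := by
      intro e he
      by_contra hcon
      push_neg at hcon
      have he1 : (q:ℝ) < e := by
        by_contra hle
        push_neg at hle
        exact he.2 (hstay e ⟨he.1, hle⟩)
      have hdist : dist e (q:ℝ) < ε := by
        rw [Real.dist_eq, abs_of_pos (by linarith)]
        linarith
      have := hball e hdist
      have hzero : infDist (x + W e ω₁) Oᶜ = 0 := infDist_zero_of_mem he.2
      rw [Real.dist_eq, hzero, zero_sub, abs_neg, abs_of_pos hpos] at this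
      linarith
    have : (q:ℝ) + ε/2 ≤ sInf Es := le_csInf hne hkey
    rw [tau, ← hEs]
    linarith


include hO hOc hcont in
lemma tau_eq_props {c : ℝ} (hc : 0 < c) (heq : tau O W x ω₁ = c) :
    (∀ u, 0 < u → u < c → x + W u ω₁ ∈ O) ∧ x + W c ω₁ ∈ frontier O := by
  set Es := {u : ℝ | 0 < u ∧ x + W u ω₁ ∉ O} with hEs
  have hbd : BddBelow Es := ⟨0, fun e he => he.1.le⟩
  have hne : Es.Nonempty := by
    by_contra hcon
    rw [not_nonempty_iff_eq_empty] at hcon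
    rw [tau, ← hEs, hcon, Real.sInf_empty] at heq
    linarith
  have hstay : ∀ u, 0 < u → u < c → x + W u ω₁ ∈ O := by
    intro u hu0 huc
    by_contra hnot
    have : u ∈ Es := ⟨hu0, hnot⟩
    have := csInf_le hbd this
    rw [tau, ← hEs] at heq
    linarith
  refine ⟨hstay, ?_⟩
  have hO' := hO.frontier_eq
  rw [hO'] ; refine ⟨?_, ?_⟩
  · -- in closure O : approach from below
    have hseq : Tendsto (fun k : ℕ => c - c/(k+2)) atTop (𝓝 c) := by
      have h1 : Tendsto (fun k : ℕ => c/((k:ℝ)+2)) atTop (𝓝 0) :=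
        Tendsto.div_atTop tendsto_const_nhds
          (tendsto_atTop_add_const_right atTop 2 tendsto_natCast_atTop_atTop)
      have h2 : Tendsto (fun k : ℕ => c - c/((k:ℝ)+2)) atTop (𝓝 (c - 0)) :=
        tendsto_const_nhds.sub h1
      simpa using h2
    have hmem : ∀ k : ℕ, x + W (c - c/(k+2)) ω₁ ∈ O := by
      intro k
      apply hstay
      · have : c/(k+2) < c := by
          rw [div_lt_iff₀ (by positivity)]
          nlinarith [Nat.cast_nonneg (α := ℝ) k]
        linarith
      · have : 0 < c/(k+2) := by positivity
        linarith
    have hW : Tendsto (fun k : ℕ => x + W (c - c/(k+2)) ω₁) atTop (𝓝 (x + W c ω₁)) :=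
      (continuous_const.add hcont).continuousAt.tendsto.comp hseq
    exact mem_closure_of_tendsto hW (Filter.Eventually.of_forall hmem)
  · -- not in O : approach from exit set
    intro hmemO
    have hpos : 0 < infDist (x + W c ω₁) Oᶜ := (mem_O_iff hO hOc).1 hmemO
    have hf := continuous_phi (x := x) (O := O) hcont
    obtain ⟨ε, hε, hball⟩ := Metric.continuous_iff.1 hf c _ hpos
    -- every element of Es is ≥ c (= sInf) but there is one < c + ε giving contradiction
    have hsinf : sInf Es = c := by rw [tau, ← hEs] at heq; exact heq
    have : sInf Es < c + min ε c := by rw [hsinf]; have := lt_min hε hc; linarith [lt_min hε hc]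
    obtain ⟨e, heE, he2⟩ := exists_lt_of_csInf_lt hne this
    have he1 : c ≤ e := hsinf ▸ csInf_le hbd heE
    have hdist : dist e c < ε := by
      rw [Real.dist_eq, abs_of_nonneg (by linarith)]
      have := min_le_left ε c
      linarith
    have := hball e hdist
    have hzero : infDist (x + W e ω₁) Oᶜ = 0 := infDist_zero_of_mem heE.2
    rw [Real.dist_eq, hzero, zero_sub, abs_neg, abs_of_pos hpos] at this
    linarith

end char

section Dside
variable {Ω₂ : Type*} {D : ℝ → Ω₂ → ℝ} {ω₂ : Ω₂}

/-- good path property for the subordinator -/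
def GoodD (D : ℝ → Ω₂ → ℝ) (ω₂ : Ω₂) : Prop :=
  D 0 ω₂ = 0 ∧ StrictMonoOn (fun s => D s ω₂) (Ici 0) ∧
    ∀ t ≥ (0:ℝ), ContinuousWithinAt (fun s => D s ω₂) (Ici t) t

lemma GoodD.mono (h : GoodD D ω₂) {a b : ℝ} (ha : 0 ≤ a) (hab : a ≤ b) :
    D a ω₂ ≤ D b ω₂ :=
  h.2.1.monotoneOn ha (le_trans ha hab) hab

lemma GoodD.pos (h : GoodD D ω₂) {t : ℝ} (ht : 0 < t) : 0 < D t ω₂ := by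
  have := h.2.1 (self_mem_Ici) (le_of_lt ht : (0:ℝ) ≤ t) ht
  rw [show (fun s => D s ω₂) 0 = D 0 ω₂ from rfl, h.1] at this
  exact this

lemma GoodD.sup_eq (h : GoodD D ω₂) {t : ℝ} (ht : 0 ≤ t) :
    sSup ((fun s => D s ω₂) '' Icc 0 t) = D t ω₂ := by
  apply IsGreatest.csSup_eq
  constructor
  · exact ⟨t, ⟨ht, le_refl t⟩, rfl⟩
  · rintro y ⟨a, ha, rfl⟩
    exact h.mono ha.1 ha.2

/-- rational approximation from the left of `D s` -/
def Napprox (D : ℝ → Ω₂ → ℝ) (s : ℝ) (ω₂ : Ω₂) : Prop :=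
  ∀ ε : ℚ, 0 < ε → ∃ r : ℚ, 0 ≤ (r:ℝ) ∧ (r:ℝ) < s ∧ D s ω₂ - ε < D r ω₂

def DSet (D : ℝ → Ω₂ → ℝ) (q : ℚ) (s : ℝ) : Set Ω₂ :=
  {ω₂ | ∀ r : ℚ, (r : ℝ) ∈ Icc (0:ℝ) s → D r ω₂ < q}

variable {O : Set (EuclideanSpace ℝ (Fin d))} {W : ℝ → Ω₁ → EuclideanSpace ℝ (Fin d)}
  {x : EuclideanSpace ℝ (Fin d)} {ω₁ : Ω₁}

def BSet (O : Set (EuclideanSpace ℝ (Fin d))) (W : ℝ → Ω₁ → EuclideanSpace ℝ (Fin d))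
    (D : ℝ → Ω₂ → ℝ) (x : EuclideanSpace ℝ (Fin d)) (s : ℝ) : Set (Ω₁ × Ω₂) :=
  ⋃ (q : ℚ), ⋃ (_ : 0 < q), (StaySet O W x q ∩ ExitSet O W x) ×ˢ DSet D q s

lemma BSet_anti {s s' : ℝ} (hss' : s ≤ s') : BSet O W D x s' ⊆ BSet O W D x s := by
  refine iUnion_mono fun q => iUnion_mono fun hq => prod_mono_right fun ω hω r hr => ?_
  exact hω r ⟨hr.1, hr.2.trans hss'⟩

lemma mem_BSet_iff (hO : IsOpen O) (hOc : Oᶜ.Nonempty)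
    (hcont : Continuous (fun u => W u ω₁)) (hP2 : GoodD D ω₂)
    {s : ℝ} (hN : Napprox D s ω₂) (hs : 0 < s) :
    (ω₁, ω₂) ∈ BSet O W D x s ↔ D s ω₂ < tau O W x ω₁ := by
  constructor
  · intro h
    simp only [BSet, mem_iUnion] at h
    obtain ⟨q, hq, hmem⟩ := h
    rw [mem_prod] at hmem
    obtain ⟨hse, hD⟩ := hmem
    have htau : (q:ℝ) < tau O W x ω₁ := (tau_gt_iff hO hOc hcont hq).2 hse
    have hDs : D s ω₂ ≤ q := by
      by_contra hcon
      push_neg at hcon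
      obtain ⟨ε, hε1, hε2⟩ := exists_rat_btwn (sub_pos.2 hcon)
      have hε1' : (0:ℚ) < ε := by exact_mod_cast hε1
      obtain ⟨r, hr0, hrs, hrD⟩ := hN ε hε1'
      have := hD r ⟨hr0, hrs.le⟩
      have hq' : D s ω₂ - (ε:ℝ) > (q:ℝ) := by linarith
      linarith
    linarith
  · intro h
    have hDpos : 0 < D s ω₂ := hP2.pos hs
    obtain ⟨q, hq1, hq2⟩ := exists_rat_btwn h
    have hqpos : (0:ℚ) < q := by
      have : (0:ℝ) < q := lt_trans hDpos hq1
      exact_mod_cast this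
    simp only [BSet, mem_iUnion]
    refine ⟨q, hqpos, ?_⟩
    rw [mem_prod]
    refine ⟨(tau_gt_iff hO hOc hcont hqpos).1 hq2, fun r hr => ?_⟩
    calc D (r:ℝ) ω₂ ≤ D s ω₂ := hP2.mono hr.1 hr.2
    _ < q := hq1

end Dside

section Meas
variable {Ω₂ : Type*} [MeasurableSpace Ω₁] [MeasurableSpace Ω₂]
variable {O : Set (EuclideanSpace ℝ (Fin d))} {W : ℝ → Ω₁ → EuclideanSpace ℝ (Fin d)}
  {D : ℝ → Ω₂ → ℝ}

lemma measurable_base (hWmeas : ∀ t, Measurable (W t)) (r : ℚ) :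
    Measurable fun z : EuclideanSpace ℝ (Fin d) × (Ω₁ × Ω₂) =>
      infDist (z.1 + W r z.2.1) Oᶜ :=
  (continuous_infDist_pt Oᶜ).measurable.comp
    (measurable_fst.add ((hWmeas r).comp (measurable_fst.comp measurable_snd)))

lemma measurableSet_CSet (hWmeas : ∀ t, Measurable (W t)) (hDmeas : ∀ t, Measurable (D t))
    (s : ℝ) :
    MeasurableSet {z : EuclideanSpace ℝ (Fin d) × (Ω₁ × Ω₂) | z.2 ∈ BSet O W D z.1 s} := by
  have hrw : {z : EuclideanSpace ℝ (Fin d) × (Ω₁ × Ω₂) | z.2 ∈ BSet O W D z.1 s} =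
      ⋃ (q : ℚ), ⋃ (_ : 0 < q),
        ((⋂ (n : ℕ), ⋃ (δ : ℚ), ⋃ (_ : 0 < δ), ⋂ (r : ℚ),
            ⋂ (_ : (r:ℝ) ∈ Icc ((q:ℝ)/(n+2)) (q:ℝ)),
            {z : EuclideanSpace ℝ (Fin d) × (Ω₁ × Ω₂) |
              (δ:ℝ) ≤ infDist (z.1 + W r z.2.1) Oᶜ})
        ∩ ((⋃ (n : ℕ), ⋂ (δ : ℚ), ⋂ (_ : 0 < δ), ⋃ (r : ℚ),
            ⋃ (_ : (r:ℝ) ∈ Icc (1/(n+1):ℝ) (n+2)),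
            {z : EuclideanSpace ℝ (Fin d) × (Ω₁ × Ω₂) |
              infDist (z.1 + W r z.2.1) Oᶜ < δ})
        ∩ (⋂ (r : ℚ), ⋂ (_ : (r:ℝ) ∈ Icc (0:ℝ) s),
            {z : EuclideanSpace ℝ (Fin d) × (Ω₁ × Ω₂) | D r z.2.2 < q}))) := by
    ext z
    simp only [BSet, StaySet, ExitSet, DSet, mem_iUnion, mem_iInter, mem_inter_iff,
      mem_prod, mem_setOf_eq]
    tauto
  rw [hrw]
  refine MeasurableSet.iUnion fun q => MeasurableSet.iUnion fun _ => ?_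
  refine MeasurableSet.inter ?_ (MeasurableSet.inter ?_ ?_)
  · refine MeasurableSet.iInter fun n => MeasurableSet.iUnion fun δ =>
      MeasurableSet.iUnion fun _ => MeasurableSet.iInter fun r =>
      MeasurableSet.iInter fun _ => ?_
    exact measurableSet_le measurable_const (measurable_base hWmeas r)
  · refine MeasurableSet.iUnion fun n => MeasurableSet.iInter fun δ =>
      MeasurableSet.iInter fun _ => MeasurableSet.iUnion fun r =>
      MeasurableSet.iUnion fun _ => ?_
    exact measurableSet_lt (measurable_base hWmeas r) measurable_const
  · refine MeasurableSet.iInter fun r => MeasurableSet.iInter fun _ => ?_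
    exact measurableSet_lt ((hDmeas r).comp (measurable_snd.comp measurable_snd))
      measurable_const

lemma measurableSet_BSet (hWmeas : ∀ t, Measurable (W t)) (hDmeas : ∀ t, Measurable (D t))
    (x : EuclideanSpace ℝ (Fin d)) (s : ℝ) : MeasurableSet (BSet O W D x s) := by
  have := (measurableSet_CSet hWmeas hDmeas (O := O) s).preimage
    (measurable_prodMk_left (x := x))
  simpa using this

end Meas

section Prob
variable {Ω₂ : Type*} [MeasurableSpace Ω₁] [MeasurableSpace Ω₂]
variable {μ₁ : Measure Ω₁} {μ₂ : Measure Ω₂}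

lemma ae_prod_fst [SFinite μ₁] [SFinite μ₂] [IsFiniteMeasure μ₂] {p : Ω₁ → Prop}
    (h : ∀ᵐ ω₁ ∂μ₁, p ω₁) : ∀ᵐ z ∂(μ₁.prod μ₂), p z.1 := by
  rw [ae_iff] at h ⊢
  obtain ⟨N, hN1, hN2, hN3⟩ := exists_measurable_superset_of_null h
  refine measure_mono_null (fun z hz => ?_) (?_ : (μ₁.prod μ₂) (N ×ˢ univ) = 0)
  · exact ⟨hN1 hz, mem_univ _⟩
  · rw [Measure.prod_prod, hN3, zero_mul]

lemma ae_prod_snd [SFinite μ₁] [SFinite μ₂] [IsFiniteMeasure μ₁] {p : Ω₂ → Prop}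
    (h : ∀ᵐ ω₂ ∂μ₂, p ω₂) : ∀ᵐ z ∂(μ₁.prod μ₂), p z.2 := by
  rw [ae_iff] at h ⊢
  obtain ⟨N, hN1, hN2, hN3⟩ := exists_measurable_superset_of_null h
  refine measure_mono_null (fun z hz => ?_) (?_ : (μ₁.prod μ₂) (univ ×ˢ N) = 0)
  · exact ⟨mem_univ _, hN1 hz⟩
  · rw [Measure.prod_prod, hN3, mul_zero]

variable {D : ℝ → Ω₂ → ℝ}

lemma ae_Napprox [IsProbabilityMeasure μ₂] (hDmeas : ∀ t, Measurable (D t))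
    (hDpath : ∀ᵐ ω₂ ∂μ₂, GoodD D ω₂)
    (hDstat : ∀ s t : ℝ, 0 ≤ s → 0 ≤ t →
      Measure.map (fun ω₂ => D (s + t) ω₂ - D s ω₂) μ₂ = Measure.map (D t) μ₂)
    {s : ℝ} (hs : 0 < s) : ∀ᵐ ω₂ ∂μ₂, Napprox D s ω₂ := by
  rw [show (fun ω₂ => Napprox D s ω₂) = fun ω₂ => ∀ ε : ℚ, 0 < ε →
      ∃ r : ℚ, 0 ≤ (r:ℝ) ∧ (r:ℝ) < s ∧ D s ω₂ - ε < D r ω₂ from rfl]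
  rw [ae_all_iff]
  intro ε
  by_cases hε : 0 < ε
  swap
  · filter_upwards with ω₂ h; exact absurd h hε
  have hε' : (0:ℝ) < ε := by exact_mod_cast hε
  -- the bad set
  set A : Set Ω₂ := ⋂ (r : ℚ), ⋂ (_ : 0 ≤ (r:ℝ) ∧ (r:ℝ) < s), {ω₂ | D r ω₂ ≤ D s ω₂ - ε}
    with hA
  have hAmeas : MeasurableSet A := by
    refine MeasurableSet.iInter fun r => MeasurableSet.iInter fun _ => ?_
    exact measurableSet_le (hDmeas r) ((hDmeas s).sub measurable_const)
  -- rational approximations of s from below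
  have hrn : ∀ n : ℕ, ∃ r : ℚ, max 0 (s - 1/(n+1)) < (r:ℝ) ∧ (r:ℝ) < s := by
    intro n
    apply exists_rat_btwn
    rw [max_lt_iff]
    refine ⟨hs, ?_⟩
    have : (0:ℝ) < 1/((n:ℝ)+1) := by positivity
    linarith
  choose rn hrn1 hrn2 using hrn
  have hrn0 : ∀ n, (0:ℝ) ≤ rn n := fun n => le_of_lt (lt_of_le_of_lt (le_max_left _ _) (hrn1 n))
  have hrnlow : ∀ n, s - 1/(n+1) < rn n := fun n => lt_of_le_of_lt (le_max_right _ _) (hrn1 n)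
  -- A is contained in each {ε ≤ D s - D (rn n)}
  have hsub : ∀ n, A ⊆ {ω₂ | (ε:ℝ) ≤ D s ω₂ - D (rn n) ω₂} := by
    intro n ω₂ hω₂
    have := mem_iInter.1 (mem_iInter.1 hω₂ (rn n)) ⟨hrn0 n, hrn2 n⟩
    simp only [mem_setOf_eq] at this ⊢
    linarith
  -- via stationarity
  have hkey : ∀ n, μ₂ {ω₂ | (ε:ℝ) ≤ D s ω₂ - D (rn n) ω₂}
      = μ₂ {ω₂ | (ε:ℝ) ≤ D (s - rn n) ω₂} := by
    intro n
    have hmap := hDstat (rn n) (s - rn n) (hrn0 n) (by linarith [hrn2 n])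
    have h1 : (fun ω₂ => D ((rn n : ℝ) + (s - rn n)) ω₂ - D (rn n) ω₂)
        = fun ω₂ => D s ω₂ - D (rn n) ω₂ := by
      rw [show (rn n : ℝ) + (s - rn n) = s by ring]
    rw [h1] at hmap
    have hmeas1 : Measurable fun ω₂ => D s ω₂ - D (rn n) ω₂ := (hDmeas s).sub (hDmeas (rn n))
    have e1 : {ω₂ | (ε:ℝ) ≤ D s ω₂ - D (rn n) ω₂}
        = (fun ω₂ => D s ω₂ - D (rn n) ω₂) ⁻¹' (Ici (ε:ℝ)) := rfl
    have e2 : {ω₂ | (ε:ℝ) ≤ D (s - rn n) ω₂} = (D (s - rn n)) ⁻¹' (Ici (ε:ℝ)) := rfl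
    rw [e1, e2, ← Measure.map_apply hmeas1 measurableSet_Ici,
      ← Measure.map_apply (hDmeas _) measurableSet_Ici, hmap]
  -- the rhs tends to zero
  have hh0 : Tendsto (fun n : ℕ => s - rn n) atTop (𝓝 0) := by
    have hub : ∀ n : ℕ, s - rn n ≤ 1/((n:ℝ)+1) := fun n => by linarith [hrnlow n]
    have hlb : ∀ n : ℕ, (0:ℝ) ≤ s - rn n := fun n => by linarith [hrn2 n]
    exact tendsto_of_tendsto_of_tendsto_of_le_of_le tendsto_const_nhds
      tendsto_one_div_add_atTop_nhds_zero_nat hlb hub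
  have htend : Tendsto (fun n => μ₂ {ω₂ | (ε:ℝ) ≤ D (s - rn n) ω₂}) atTop (𝓝 0) := by
    have heq : ∀ n, μ₂ {ω₂ | (ε:ℝ) ≤ D (s - rn n) ω₂}
        = ∫⁻ ω₂, ({ω₂ | (ε:ℝ) ≤ D (s - rn n) ω₂}).indicator 1 ω₂ ∂μ₂ := fun n =>
      (lintegral_indicator_one (measurableSet_le measurable_const (hDmeas _))).symm
    simp only [heq]
    have h0' : (0:ℝ≥0∞) = ∫⁻ _, 0 ∂μ₂ := by simp
    rw [h0']
    apply tendsto_lintegral_of_dominated_convergence (fun _ => 1)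
    · intro n
      exact (measurable_one.indicator (measurableSet_le measurable_const (hDmeas _)))
    · intro n
      filter_upwards with ω₂
      by_cases h : ω₂ ∈ {ω₂ | (ε:ℝ) ≤ D (s - rn n) ω₂} <;> simp [h]
    · simp [lintegral_one]
    · filter_upwards [hDpath] with ω₂ hgood
      have hDto : Tendsto (fun n => D (s - rn n) ω₂) atTop (𝓝 0) := by
        have hcw := hgood.2.2 0 (le_refl 0)
        rw [ContinuousWithinAt] at hcw
        have : Tendsto (fun n : ℕ => s - rn n) atTop (𝓝[Ici 0] 0) := by
          rw [tendsto_nhdsWithin_iff]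
          exact ⟨hh0, Filter.Eventually.of_forall fun n => by
            simp only [mem_Ici]; linarith [hrn2 n]⟩
        have := hcw.comp this
        rwa [hgood.1] at this
      have hev : ∀ᶠ n in atTop, ({ω₂ | (ε:ℝ) ≤ D (s - rn n) ω₂}).indicator
          (1 : Ω₂ → ℝ≥0∞) ω₂ = 0 := by
        filter_upwards [hDto.eventually (eventually_lt_nhds hε')] with n hn
        apply indicator_of_notMem
        simp only [mem_setOf_eq, not_le]
        exact hn
      exact Tendsto.congr' (by filter_upwards [hev] with n hn; exact hn.symm) tendsto_const_nhds
  -- conclude μ₂ A = 0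
  have hA0 : μ₂ A = 0 := by
    have hle : ∀ n, μ₂ A ≤ μ₂ {ω₂ | (ε:ℝ) ≤ D (s - rn n) ω₂} := by
      intro n
      rw [← hkey n]
      exact measure_mono (hsub n)
    have := ge_of_tendsto' htend hle
    exact le_antisymm this (zero_le)
  have hfinal : ∀ᵐ ω₂ ∂μ₂, ∃ r : ℚ, 0 ≤ (r:ℝ) ∧ (r:ℝ) < s ∧ D s ω₂ - ε < D r ω₂ := by
    rw [ae_iff]
    refine measure_mono_null (fun ω₂ hω₂ => ?_) hA0
    simp only [mem_setOf_eq] at hω₂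
    push_neg at hω₂
    refine mem_iInter.2 fun r => mem_iInter.2 fun hr => ?_
    simp only [mem_setOf_eq]
    exact hω₂ r hr.1 hr.2
  filter_upwards [hfinal] with ω₂ h _
  exact h

end Prob

section Glem
variable {O : Set (EuclideanSpace ℝ (Fin d))}

lemma volume_closure_lt_top (hObd : Bornology.IsBounded O) :
    volume (closure O) < ∞ :=
  (Metric.isCompact_of_isClosed_isBounded isClosed_closure hObd.closure).measure_lt_top

lemma volume_frontier_lt_top (hObd : Bornology.IsBounded O) :
    volume (frontier O) < ∞ :=
  lt_of_le_of_lt (measure_mono frontier_subset_closure) (volume_closure_lt_top hObd)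

lemma g_tendsto (hO : IsOpen O) (hObd : Bornology.IsBounded O)
    {v : ℕ → EuclideanSpace ℝ (Fin d)} (hv : Tendsto v atTop (𝓝 0)) :
    Tendsto (fun m => volume ({y : EuclideanSpace ℝ (Fin d) | y + v m ∈ O} ∩ frontier O))
      atTop (𝓝 0) := by
  have hvolO : volume O < ∞ :=
    lt_of_le_of_lt (measure_mono subset_closure) (volume_closure_lt_top hObd)
  set S : ℕ → Set (EuclideanSpace ℝ (Fin d)) := fun m => {y | y + v m ∈ O} with hS
  have hSmeas : ∀ m, MeasurableSet (S m) := fun m =>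
    (hO.preimage (continuous_id.add continuous_const)).measurableSet
  have hSvol : ∀ m, volume (S m) = volume O := fun m =>
    measure_preimage_add_right volume (v m) O
  have hdisj : ∀ m, Disjoint (S m ∩ frontier O) (S m ∩ O) := by
    intro m
    refine Set.disjoint_left.2 fun y hy1 hy2 => ?_
    have h1 : y ∈ frontier O := hy1.2
    rw [hO.frontier_eq] at h1
    exact h1.2 hy2.2
  have hsum : ∀ m, volume (S m ∩ frontier O) + volume (S m ∩ O) ≤ volume O := by
    intro m
    rw [← measure_union (hdisj m) ((hSmeas m).inter hO.measurableSet)]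
    rw [← hSvol m]
    exact measure_mono (union_subset inter_subset_left inter_subset_left)
  -- Fatou: liminf of volume (S m ∩ O) is at least volume O
  have hliminf : volume O ≤ liminf (fun m => volume (S m ∩ O)) atTop := by
    have h1 : ∀ m, volume (S m ∩ O)
        = ∫⁻ y, ((S m ∩ O).indicator 1) y ∂volume := fun m =>
      (lintegral_indicator_one ((hSmeas m).inter hO.measurableSet)).symm
    have h2 : volume O = ∫⁻ y, (O.indicator 1) y ∂volume :=
      (lintegral_indicator_one hO.measurableSet).symm
    rw [h2]
    simp only [h1]
    refine le_trans (lintegral_mono fun y => ?_)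
      (lintegral_liminf_le fun m =>
        measurable_one.indicator ((hSmeas m).inter hO.measurableSet))
    by_cases hy : y ∈ O
    · have hev : ∀ᶠ m in atTop,
          ((S m ∩ O).indicator (1 : EuclideanSpace ℝ (Fin d) → ℝ≥0∞)) y = 1 := by
        have hyv : Tendsto (fun m => y + v m) atTop (𝓝 y) := by
          have := tendsto_const_nhds (x := y) (f := atTop (α := ℕ)) |>.add hv
          simpa using this
        filter_upwards [hyv.eventually (hO.eventually_mem hy)] with m hm
        exact Set.indicator_of_mem (show y ∈ S m ∩ O from ⟨hm, hy⟩)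
          (1 : EuclideanSpace ℝ (Fin d) → ℝ≥0∞)
      have : liminf (fun m =>
          ((S m ∩ O).indicator (1 : EuclideanSpace ℝ (Fin d) → ℝ≥0∞)) y) atTop = 1 := by
        rw [liminf_congr hev]
        exact liminf_const 1
      rw [this]
      by_cases h : y ∈ O <;> simp [h]
    · simp [hy]
  -- conclude
  rw [ENNReal.tendsto_atTop_zero]
  intro ε hε
  by_cases hcase : volume O ≤ ε
  · refine ⟨0, fun m _ => ?_⟩
    calc volume (S m ∩ frontier O) ≤ volume (S m) := measure_mono inter_subset_left
    _ = volume O := hSvol m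
    _ ≤ ε := hcase
  · push_neg at hcase
    have hO0 : volume O ≠ 0 := fun h => by rw [h] at hcase; exact (not_lt_of_ge (zero_le)) hcase
    have hsub : volume O - ε < liminf (fun m => volume (S m ∩ O)) atTop :=
      lt_of_lt_of_le (ENNReal.sub_lt_self hvolO.ne hO0 hε.ne') hliminf
    have hev := eventually_lt_of_lt_liminf hsub
    rw [eventually_atTop] at hev
    obtain ⟨N, hN⟩ := hev
    refine ⟨N, fun m hm => ?_⟩
    have h1 := hN m hm
    have h2 := hsum m
    have h3 : volume (S m ∩ O) ≠ ∞ := by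
      rw [← lt_top_iff_ne_top]
      exact lt_of_le_of_lt (measure_mono inter_subset_right) hvolO
    -- volume O ≤ volume (S m ∩ O) + ε
    have h4 : volume O ≤ volume (S m ∩ O) + ε := by
      rw [← tsub_le_iff_right]
      exact le_of_lt h1
    have h5 : volume (S m ∩ frontier O) + volume (S m ∩ O)
        ≤ volume (S m ∩ O) + ε := le_trans h2 h4
    rw [add_comm (volume (S m ∩ O)) ε] at h5
    exact (ENNReal.add_le_add_iff_right h3).1 h5

end Glem

section Wtilde
variable [MeasurableSpace Ω₁] {W : ℝ → Ω₁ → EuclideanSpace ℝ (Fin d)}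

open scoped Classical in
/-- globally measurable version of the path map -/
noncomputable def Wt (W : ℝ → Ω₁ → EuclideanSpace ℝ (Fin d)) (G : Set Ω₁) :
    ℝ × Ω₁ → EuclideanSpace ℝ (Fin d) :=
  fun z => if z.2 ∈ G then W z.1 z.2 else 0

lemma measurable_Wt (hWmeas : ∀ t, Measurable (W t)) {G : Set Ω₁} (hG : MeasurableSet G)
    (hGcont : ∀ ω₁ ∈ G, Continuous fun s => W s ω₁) : Measurable (Wt W G) := by
  classical
  -- dyadic approximations
  set qn : ℕ → ℝ → ℝ := fun n s => ((⌈s * 2^n⌉ : ℤ) : ℝ) / 2^n with hqn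
  have hqn_meas : ∀ n, Measurable fun z : ℝ × Ω₁ => W (qn n z.1) z.2 := by
    intro n
    intro B hB
    have hpre : (fun z : ℝ × Ω₁ => W (qn n z.1) z.2) ⁻¹' B
        = ⋃ (k : ℤ), ({s : ℝ | ⌈s * 2^n⌉ = k} ×ˢ ((W ((k:ℝ)/2^n)) ⁻¹' B)) := by
      ext z
      simp only [mem_preimage, mem_iUnion, mem_prod, mem_setOf_eq]
      constructor
      · intro h
        exact ⟨⌈z.1 * 2^n⌉, rfl, h⟩
      · rintro ⟨k, hk, h⟩
        rw [hqn]
        simp only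
        rw [hk]
        exact h
    rw [hpre]
    refine MeasurableSet.iUnion fun k => MeasurableSet.prod ?_ ((hWmeas _) hB)
    exact (Int.measurable_ceil.comp (measurable_id.mul_const _)) (measurableSet_singleton k)
  have hstep : ∀ n, Measurable fun z : ℝ × Ω₁ =>
      if z.2 ∈ G then W (qn n z.1) z.2 else 0 := by
    intro n
    exact Measurable.ite (hG.preimage measurable_snd) (hqn_meas n) measurable_const
  apply measurable_of_tendsto_metrizable hstep
  rw [tendsto_pi_nhds]
  intro z
  by_cases hz : z.2 ∈ G
  · simp only [Wt, hz, if_true]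
    have hq : Tendsto (fun n => qn n z.1) atTop (𝓝 z.1) := by
      have hub : ∀ n : ℕ, qn n z.1 ≤ z.1 + (1/2)^n := by
        intro n
        rw [hqn]
        simp only
        rw [div_le_iff₀ (by positivity)]
        refine le_of_lt ?_
        have h1 := Int.ceil_lt_add_one (z.1 * 2^n)
        have h2 : ((1:ℝ)/2)^n * 2^n = 1 := by
          rw [← mul_pow]; norm_num
        calc ((⌈z.1 * 2^n⌉ : ℤ) : ℝ) < z.1 * 2^n + 1 := h1
        _ ≤ (z.1 + (1/2)^n) * 2^n := by rw [add_mul]; nlinarith [h2]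
      have hlb : ∀ n : ℕ, z.1 ≤ qn n z.1 := by
        intro n
        rw [hqn]
        simp only
        rw [le_div_iff₀ (by positivity)]
        exact Int.le_ceil _
      have h2 : Tendsto (fun n : ℕ => z.1 + (1/2:ℝ)^n) atTop (𝓝 (z.1 + 0)) :=
        tendsto_const_nhds.add (tendsto_pow_atTop_nhds_zero_of_lt_one (by norm_num) (by norm_num))
      rw [show (z.1 + 0) = z.1 by ring] at h2
      exact tendsto_of_tendsto_of_tendsto_of_le_of_le tendsto_const_nhds h2 hlb hub
    exact ((hGcont z.2 hz).tendsto z.1).comp hq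
  · simp only [Wt, hz, if_false]
    exact tendsto_const_nhds

end Wtilde

section MainDefect
variable {Ω₂ : Type*} [MeasurableSpace Ω₁] [MeasurableSpace Ω₂]

lemma main_defect
    (μ₁ : Measure Ω₁) (μ₂ : Measure Ω₂) [IsProbabilityMeasure μ₁] [IsProbabilityMeasure μ₂]
    {W : ℝ → Ω₁ → EuclideanSpace ℝ (Fin d)} {D : ℝ → Ω₂ → ℝ}
    {O : Set (EuclideanSpace ℝ (Fin d))} (hO : IsOpen O) (hObd : Bornology.IsBounded O)
    (hOc : Oᶜ.Nonempty)
    (hWmeas : ∀ t, Measurable (W t)) (hWcont : ∀ᵐ ω₁ ∂μ₁, Continuous fun t => W t ω₁)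
    (hDmeas : ∀ t, Measurable (D t)) (hDpath : ∀ᵐ ω₂ ∂μ₂, GoodD D ω₂)
    (hDstat : ∀ s t : ℝ, 0 ≤ s → 0 ≤ t →
      Measure.map (fun ω₂ => D (s + t) ω₂ - D s ω₂) μ₂ = Measure.map (D t) μ₂)
    {t : ℝ} (ht : 0 < t) {t' : ℕ → ℝ} (ht'0 : ∀ n, 0 < t' n)
    (ht'tend : Tendsto t' atTop (𝓝 t)) :
    ∀ᵐ x ∂(volume : Measure (EuclideanSpace ℝ (Fin d))),
      (μ₁.prod μ₂) ((⋂ n, BSet O W D x (t' n)) \ BSet O W D x t) = 0 := by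
  classical
  set ν := μ₁.prod μ₂ with hν
  -- good sets
  obtain ⟨N₁, hN₁sup, hN₁meas, hN₁null⟩ :=
    exists_measurable_superset_of_null (ae_iff.1 hWcont)
  set G₁ : Set Ω₁ := N₁ᶜ with hG₁
  have hG₁meas : MeasurableSet G₁ := hN₁meas.compl
  have hG₁cont : ∀ ω₁ ∈ G₁, Continuous fun s => W s ω₁ := by
    intro ω₁ h
    by_contra hcon
    exact h (hN₁sup hcon)
  have hG₁ae : ∀ᵐ ω₁ ∂μ₁, ω₁ ∈ G₁ := by
    rw [ae_iff]
    refine measure_mono_null (fun ω₁ h => ?_) hN₁null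
    simpa [hG₁] using h
  have hgood2 : ∀ᵐ ω₂ ∂μ₂, GoodD D ω₂ ∧ Napprox D t ω₂ ∧ ∀ n, Napprox D (t' n) ω₂ :=
    hDpath.and ((ae_Napprox hDmeas hDpath hDstat ht).and
      (ae_all_iff.2 fun n => ae_Napprox hDmeas hDpath hDstat (ht'0 n)))
  obtain ⟨N₂, hN₂sup, hN₂meas, hN₂null⟩ :=
    exists_measurable_superset_of_null (ae_iff.1 hgood2)
  set G₂ : Set Ω₂ := N₂ᶜ with hG₂
  have hG₂good : ∀ ω₂ ∈ G₂, GoodD D ω₂ ∧ Napprox D t ω₂ ∧ ∀ n, Napprox D (t' n) ω₂ := by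
    intro ω₂ h
    by_contra hcon
    exact h (hN₂sup hcon)
  -- joint measurability
  have hCS : ∀ s : ℝ, MeasurableSet
      {z : EuclideanSpace ℝ (Fin d) × (Ω₁ × Ω₂) | z.2 ∈ BSet O W D z.1 s} :=
    fun s => measurableSet_CSet hWmeas hDmeas s
  set RJ : Set (EuclideanSpace ℝ (Fin d) × (Ω₁ × Ω₂)) :=
    (⋂ n, {z | z.2 ∈ BSet O W D z.1 (t' n)}) \ {z | z.2 ∈ BSet O W D z.1 t} with hRJ
  have hRJmeas : MeasurableSet RJ :=
    (MeasurableSet.iInter fun n => hCS (t' n)).diff (hCS t)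
  have hRx : ∀ x : EuclideanSpace ℝ (Fin d),
      Prod.mk x ⁻¹' RJ = (⋂ n, BSet O W D x (t' n)) \ BSet O W D x t := by
    intro x
    ext p
    simp only [hRJ, mem_preimage, mem_diff, mem_iInter, mem_setOf_eq]
  -- measurable path version
  have hWt := measurable_Wt hWmeas hG₁meas hG₁cont
  -- theta
  set θ : ℕ → ℝ := fun m => 1 - 1/(m+2) with hθ
  have hθ0 : ∀ m : ℕ, 0 < θ m := by
    intro m
    rw [hθ]
    simp only
    have h1 : (1:ℝ)/((m:ℝ)+2) ≤ 1/2 := by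
      apply one_div_le_one_div_of_le
      · norm_num
      · linarith [Nat.cast_nonneg (α := ℝ) m]
    linarith
  have hθ1 : ∀ m : ℕ, θ m < 1 := by
    intro m
    rw [hθ]
    simp only
    have : (0:ℝ) < 1/((m:ℝ)+2) := by positivity
    linarith
  have hθtend : Tendsto θ atTop (𝓝 1) := by
    rw [hθ]
    have h1 : Tendsto (fun m : ℕ => 1/((m:ℝ)+2)) atTop (𝓝 0) :=
      Tendsto.div_atTop tendsto_const_nhds
        (tendsto_atTop_add_const_right atTop 2 tendsto_natCast_atTop_atTop)
    have h2 := tendsto_const_nhds (x := (1:ℝ)) (f := atTop (α := ℕ)) |>.sub h1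
    simpa using h2
  -- T sets
  set T : ℕ → Set (EuclideanSpace ℝ (Fin d) × (Ω₁ × Ω₂)) := fun m =>
    {z | z.1 + Wt W G₁ (θ m * D t z.2.2, z.2.1) ∈ O ∧
         z.1 + Wt W G₁ (D t z.2.2, z.2.1) ∈ frontier O} with hT
  have hmap : ∀ c : ℝ, Measurable fun z : EuclideanSpace ℝ (Fin d) × (Ω₁ × Ω₂) =>
      z.1 + Wt W G₁ (c * D t z.2.2, z.2.1) :=
    fun c => measurable_fst.add (hWt.comp
      (((measurable_const.mul ((hDmeas t).comp (measurable_snd.comp measurable_snd)))).prodMk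
        (measurable_fst.comp measurable_snd)))
  have hmap1 : Measurable fun z : EuclideanSpace ℝ (Fin d) × (Ω₁ × Ω₂) =>
      z.1 + Wt W G₁ (D t z.2.2, z.2.1) :=
    measurable_fst.add (hWt.comp
      (((hDmeas t).comp (measurable_snd.comp measurable_snd)).prodMk
        (measurable_fst.comp measurable_snd)))
  have hTmeas : ∀ m, MeasurableSet (T m) := by
    intro m
    have e1 : T m = ((fun z : EuclideanSpace ℝ (Fin d) × (Ω₁ × Ω₂) =>
        z.1 + Wt W G₁ (θ m * D t z.2.2, z.2.1)) ⁻¹' O) ∩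
        ((fun z : EuclideanSpace ℝ (Fin d) × (Ω₁ × Ω₂) =>
        z.1 + Wt W G₁ (D t z.2.2, z.2.1)) ⁻¹' frontier O) := rfl
    rw [e1]
    exact ((hmap (θ m)) hO.measurableSet).inter (hmap1 isClosed_frontier.measurableSet)
  -- step 1 : containment
  have hsub : ∀ (m : ℕ) (x : EuclideanSpace ℝ (Fin d)),
      (Prod.mk x ⁻¹' RJ) ∩ (G₁ ×ˢ G₂) ⊆ Prod.mk x ⁻¹' (T m) := by
    intro m x p hp
    obtain ⟨hpR, hpG⟩ := hp
    have hcont := hG₁cont p.1 hpG.1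
    obtain ⟨hgd, hNt, hNt'⟩ := hG₂good p.2 hpG.2
    rw [hRx x] at hpR
    have h1 : ∀ n, D (t' n) p.2 < tau O W x p.1 := fun n =>
      (mem_BSet_iff hO hOc hcont hgd (hNt' n) (ht'0 n)).1 (mem_iInter.1 hpR.1 n)
    have h2 : ¬ (D t p.2 < tau O W x p.1) := fun hc =>
      hpR.2 ((mem_BSet_iff hO hOc hcont hgd hNt ht).2 hc)
    have h3 : D t p.2 ≤ tau O W x p.1 := by
      by_contra hcon
      push_neg at hcon
      obtain ⟨ε, hε0, hεlt⟩ := exists_rat_btwn (sub_pos.2 hcon)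
      have hε0' : (0:ℚ) < ε := by exact_mod_cast hε0
      obtain ⟨r, hr0, hrt, hrD⟩ := hNt ε hε0'
      obtain ⟨n, hn⟩ := (ht'tend.eventually (eventually_gt_nhds hrt)).exists
      have hmono : D (r:ℝ) p.2 ≤ D (t' n) p.2 := hgd.mono hr0 hn.le
      have := h1 n
      linarith
    have htau : tau O W x p.1 = D t p.2 := le_antisymm (not_lt.1 h2) h3
    have hc0 : 0 < D t p.2 := hgd.pos ht
    obtain ⟨hstay, hfront⟩ := tau_eq_props hO hOc hcont hc0 htau
    have hWt1 : Wt W G₁ (θ m * D t p.2, p.1) = W (θ m * D t p.2) p.1 := by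
      rw [Wt, if_pos (show (θ m * D t p.2, p.1).2 ∈ G₁ from hpG.1)]
    have hWt2 : Wt W G₁ (D t p.2, p.1) = W (D t p.2) p.1 := by
      rw [Wt, if_pos (show (D t p.2, p.1).2 ∈ G₁ from hpG.1)]
    refine ⟨?_, ?_⟩
    · rw [hWt1]
      exact hstay _ (mul_pos (hθ0 m) hc0) (by nlinarith [hθ1 m, hθ0 m])
    · rw [hWt2]
      exact hfront
  -- null complement of the good rectangle
  have hGc0 : ν ((G₁ ×ˢ G₂)ᶜ) = 0 := by
    have hsubc : (G₁ ×ˢ G₂)ᶜ ⊆ (N₁ ×ˢ univ) ∪ (univ ×ˢ N₂) := by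
      intro p hp
      rw [mem_compl_iff, mem_prod] at hp
      push_neg at hp
      by_cases h : p.1 ∈ G₁
      · exact Or.inr ⟨mem_univ _, not_not.1 (hp h)⟩
      · exact Or.inl ⟨not_not.1 h, mem_univ _⟩
    refine measure_mono_null hsubc (le_antisymm (le_trans (measure_union_le _ _) ?_) (zero_le))
    rw [hν, Measure.prod_prod, Measure.prod_prod, hN₁null, hN₂null]
    simp
  -- step 2-3 : Tonelli and translation
  have hTon : ∀ m, ∫⁻ x, ν (Prod.mk x ⁻¹' T m) ∂volume
      = ∫⁻ p, volume ((fun x => (x, p)) ⁻¹' T m) ∂ν := by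
    intro m
    rw [← Measure.prod_apply (hTmeas m), Measure.prod_apply_symm (hTmeas m)]
  have hsect : ∀ (m : ℕ) (p : Ω₁ × Ω₂), volume ((fun x => (x, p)) ⁻¹' T m)
      = volume ({y : EuclideanSpace ℝ (Fin d) |
          y + (Wt W G₁ (θ m * D t p.2, p.1) - Wt W G₁ (D t p.2, p.1)) ∈ O} ∩ frontier O) := by
    intro m p
    set a := Wt W G₁ (θ m * D t p.2, p.1) with ha
    set b := Wt W G₁ (D t p.2, p.1) with hb
    have hset : ((fun x => (x, p)) ⁻¹' T m)
        = (fun x => x + b) ⁻¹' ({y | y + (a - b) ∈ O} ∩ frontier O) := by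
      ext x
      simp only [mem_preimage, hT, mem_setOf_eq, mem_inter_iff]
      constructor
      · rintro ⟨h1, h2⟩
        refine ⟨?_, h2⟩
        rw [show x + b + (a - b) = x + a by abel]
        exact h1
      · rintro ⟨h1, h2⟩
        rw [show x + b + (a - b) = x + a by abel] at h1
        exact ⟨h1, h2⟩
    rw [hset, measure_preimage_add_right]
  -- step 4 : limit of the dominating integrals
  have hγ : Tendsto (fun m => ∫⁻ p, volume ((fun x => (x, p)) ⁻¹' T m) ∂ν) atTop (𝓝 0) := by
    have h0 : (0:ℝ≥0∞) = ∫⁻ _, 0 ∂ν := by simp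
    rw [h0]
    apply tendsto_lintegral_of_dominated_convergence (fun _ => volume (frontier O))
    · exact fun m => measurable_measure_prodMk_right (hTmeas m)
    · intro m
      filter_upwards with p
      rw [hsect m p]
      exact measure_mono inter_subset_right
    · rw [lintegral_const]
      exact ENNReal.mul_lt_top (volume_frontier_lt_top hObd) (measure_lt_top ν univ) |>.ne
    · filter_upwards [ae_prod_fst (μ₂ := μ₂) hG₁ae] with p hp
      simp only [hsect]
      apply g_tendsto hO hObd
      have hWt1 : ∀ m, Wt W G₁ (θ m * D t p.2, p.1) = W (θ m * D t p.2) p.1 :=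
        fun m => by rw [Wt, if_pos (show (θ m * D t p.2, p.1).2 ∈ G₁ from hp)]
      have hWt2 : Wt W G₁ (D t p.2, p.1) = W (D t p.2) p.1 := by
        rw [Wt, if_pos (show (D t p.2, p.1).2 ∈ G₁ from hp)]
      simp only [hWt1, hWt2]
      have hθc : Tendsto (fun m => θ m * D t p.2) atTop (𝓝 (D t p.2)) := by
        have := hθtend.mul_const (D t p.2)
        rwa [one_mul] at this
      have hWc : Tendsto (fun m => W (θ m * D t p.2) p.1) atTop (𝓝 (W (D t p.2) p.1)) :=
        ((hG₁cont p.1 hp).tendsto (D t p.2)).comp hθc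
      have := hWc.sub (tendsto_const_nhds (x := W (D t p.2) p.1) (f := atTop (α := ℕ)))
      simpa using this
  -- step 5 : conclude
  have hL : ∫⁻ x, ν (Prod.mk x ⁻¹' RJ) ∂volume = 0 := by
    have hle : ∀ m, ∫⁻ x, ν (Prod.mk x ⁻¹' RJ) ∂volume
        ≤ ∫⁻ p, volume ((fun x => (x, p)) ⁻¹' T m) ∂ν := by
      intro m
      rw [← hTon m]
      refine lintegral_mono fun x => ?_
      calc ν (Prod.mk x ⁻¹' RJ)
          ≤ ν ((Prod.mk x ⁻¹' RJ ∩ (G₁ ×ˢ G₂)) ∪ (G₁ ×ˢ G₂)ᶜ) := by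
            refine measure_mono fun p hp => ?_
            by_cases h : p ∈ G₁ ×ˢ G₂
            · exact Or.inl ⟨hp, h⟩
            · exact Or.inr h
      _ ≤ ν (Prod.mk x ⁻¹' RJ ∩ (G₁ ×ˢ G₂)) + ν ((G₁ ×ˢ G₂)ᶜ) := measure_union_le _ _
      _ = ν (Prod.mk x ⁻¹' RJ ∩ (G₁ ×ˢ G₂)) := by rw [hGc0, add_zero]
      _ ≤ ν (Prod.mk x ⁻¹' T m) := measure_mono (hsub m x)
    exact le_antisymm (ge_of_tendsto' hγ hle) (zero_le)
  have hmeasR : Measurable fun x => ν (Prod.mk x ⁻¹' RJ) :=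
    measurable_measure_prodMk_left hRJmeas
  rw [lintegral_eq_zero_iff hmeasR] at hL
  filter_upwards [hL] with x hx
  rw [← hRx x]
  exact hx

end MainDefect
end SHCAux

open MeasureTheory ProbabilityTheory Filter

/-- Continuity on `(0, ∞)` of the spectral heat content
`Q̃(t) = ∫_Ω P_x(τ_Ω^W > sup_{0 ≤ s ≤ t} D_s) dx` of a subordinate killed Brownian
motion, where `W` is a `d`-dimensional Brownian motion independent of a subordinator
`D` with strictly increasing paths (infinite Lévy measure), and `Ω` is a bounded open
set. Independence is modelled via the product measure `μ₁.prod μ₂`. -/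
theorem spectral_heat_content_continuous
    {d : ℕ} (hd : 1 ≤ d)
    {Ω₁ Ω₂ : Type*} [MeasurableSpace Ω₁] [MeasurableSpace Ω₂]
    (μ₁ : Measure Ω₁) (μ₂ : Measure Ω₂)
    [IsProbabilityMeasure μ₁] [IsProbabilityMeasure μ₂]
    (W : ℝ → Ω₁ → EuclideanSpace ℝ (Fin d))
    (D : ℝ → Ω₂ → ℝ)
    (O : Set (EuclideanSpace ℝ (Fin d))) (hO : IsOpen O)
    (hObd : Bornology.IsBounded O)
    -- Brownian motion with E[e^{i⟨ξ,W_t⟩}] = e^{-t|ξ|²}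
    (hWmeas : ∀ t, Measurable (W t))
    (hWcont : ∀ᵐ ω₁ ∂μ₁, Continuous fun t => W t ω₁)
    (hW0 : ∀ᵐ ω₁ ∂μ₁, W 0 ω₁ = 0)
    (hWindep : ∀ (n : ℕ) (u : Fin (n + 1) → ℝ), Monotone u →
      iIndepFun
        (fun i : Fin n => fun ω₁ => W (u i.succ) ω₁ - W (u i.castSucc) ω₁) μ₁)
    (hWgauss : ∀ s t : ℝ, 0 ≤ s → s ≤ t → ∀ ξ : EuclideanSpace ℝ (Fin d),
      ∫ ω₁, Complex.exp (Complex.I * ((inner ℝ ξ (W t ω₁ - W s ω₁) : ℝ) : ℂ)) ∂μ₁ =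
        Complex.exp (-(((t : ℂ) - s) * (‖ξ‖ : ℂ) ^ 2)))
    -- Lévy subordinator with strictly increasing (infinite Lévy measure) paths
    (hDmeas : ∀ t, Measurable (D t))
    (hDpath : ∀ᵐ ω₂ ∂μ₂, D 0 ω₂ = 0 ∧ StrictMonoOn (fun s => D s ω₂) (Set.Ici 0) ∧
      ∀ t ≥ (0 : ℝ), ContinuousWithinAt (fun s => D s ω₂) (Set.Ici t) t)
    (hDstat : ∀ s t : ℝ, 0 ≤ s → 0 ≤ t →
      Measure.map (fun ω₂ => D (s + t) ω₂ - D s ω₂) μ₂ = Measure.map (D t) μ₂)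
    (hDindep : ∀ (n : ℕ) (u : Fin (n + 1) → ℝ), Monotone u →
      iIndepFun
        (fun i : Fin n => fun ω₂ => D (u i.succ) ω₂ - D (u i.castSucc) ω₂) μ₂)
    (Q : ℝ → ℝ)
    (hQ : ∀ t, Q t = ∫ x in O,
      ((μ₁.prod μ₂) {p : Ω₁ × Ω₂ |
        sSup ((fun s => D s p.2) '' Set.Icc 0 t) <
          sInf {u : ℝ | 0 < u ∧ x + W u p.1 ∉ O}}).toReal) :
    ContinuousOn Q (Set.Ioi 0) := by
  classical
  open SHCAux Set Metric Topology in
  set ν := μ₁.prod μ₂ with hν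
  -- the complement of O is nonempty
  have hOc : Oᶜ.Nonempty := by
    obtain ⟨r, hr⟩ := hObd.subset_closedBall 0
    refine ⟨EuclideanSpace.single (⟨0, hd⟩ : Fin d) (|r| + 1), fun hmem => ?_⟩
    have h1 := hr hmem
    rw [Metric.mem_closedBall, dist_zero_right, EuclideanSpace.norm_single] at h1
    rw [Real.norm_of_nonneg (by positivity : (0:ℝ) ≤ |r| + 1)] at h1
    have := le_abs_self r
    linarith
  have hDpath' : ∀ᵐ ω₂ ∂μ₂, GoodD D ω₂ := hDpath
  -- identification of the probability in the statement with ν (BSet ...)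
  have hAB : ∀ s : ℝ, 0 < s → ∀ x : EuclideanSpace ℝ (Fin d),
      ν {p : Ω₁ × Ω₂ | sSup ((fun u => D u p.2) '' Set.Icc 0 s) <
        sInf {u : ℝ | 0 < u ∧ x + W u p.1 ∉ O}} = ν (BSet O W D x s) := by
    intro s hs x
    apply measure_congr
    rw [Filter.eventuallyEq_set]
    have h1 : ∀ᵐ p ∂ν, Continuous fun u => W u p.1 := ae_prod_fst hWcont
    have h2 : ∀ᵐ p ∂ν, GoodD D p.2 ∧ Napprox D s p.2 :=
      ae_prod_snd (hDpath'.and (ae_Napprox hDmeas hDpath' hDstat hs))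
    filter_upwards [h1, h2] with p hc hp2
    obtain ⟨hgd, hN⟩ := hp2
    rw [hgd.sup_eq hs.le]
    exact (mem_BSet_iff hO hOc hc hgd hN hs).symm
  -- abbreviation
  set F : ℝ → EuclideanSpace ℝ (Fin d) → ℝ≥0∞ := fun s x => ν (BSet O W D x s) with hF
  have hQF : ∀ s : ℝ, 0 < s → Q s = ∫ x in O, (F s x).toReal := by
    intro s hs
    rw [hQ s]
    congr 1
    funext x
    rw [hAB s hs x]
  -- basic integrability facts
  have hvolO : volume O < ∞ :=
    lt_of_le_of_lt (measure_mono subset_closure) (volume_closure_lt_top hObd)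
  haveI : IsFiniteMeasure (volume.restrict O) := ⟨by
    rw [Measure.restrict_apply_univ]; exact hvolO⟩
  have hFmeas : ∀ s : ℝ, Measurable fun x => F s x := fun s =>
    measurable_measure_prodMk_left (measurableSet_CSet hWmeas hDmeas s)
  have hFne : ∀ (s : ℝ) x, F s x ≠ ∞ := fun s x => measure_ne_top ν _
  have hFtoReal_le : ∀ (s : ℝ) x, (F s x).toReal ≤ 1 := by
    intro s x
    have h1 : F s x ≤ 1 := prob_le_one
    calc (F s x).toReal ≤ (1 : ℝ≥0∞).toReal :=
      ENNReal.toReal_mono ENNReal.one_ne_top h1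
    _ = 1 := by simp
  have hInt : ∀ s : ℝ, Integrable (fun x => (F s x).toReal) (volume.restrict O) := by
    intro s
    refine (integrable_const (1:ℝ)).mono' ((hFmeas s).ennreal_toReal).aestronglyMeasurable ?_
    filter_upwards with x
    rw [Real.norm_eq_abs, abs_of_nonneg ENNReal.toReal_nonneg]
    exact hFtoReal_le s x
  -- monotonicity of Q
  have hQmono : ∀ s s' : ℝ, 0 < s → s ≤ s' → Q s' ≤ Q s := by
    intro s s' hs hss'
    rw [hQF s hs, hQF s' (lt_of_lt_of_le hs hss')]
    refine integral_mono (hInt s') (hInt s) fun x => ?_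
    exact ENNReal.toReal_mono (hFne s x) (measure_mono (BSet_anti hss'))
  -- continuity at each point of Ioi 0
  intro t htmem
  have ht : 0 < t := htmem
  -- sequences from the right and from the left
  set sR : ℕ → ℝ := fun n => t + 1/(n+1) with hsR
  set sL : ℕ → ℝ := fun n => t - t/(n+2) with hsL
  have hsRt : ∀ n : ℕ, t < sR n := by
    intro n
    have h : (0:ℝ) < 1/((n:ℝ)+1) := by positivity
    show t < t + 1/((n:ℝ)+1)
    linarith
  have hsR0 : ∀ n : ℕ, 0 < sR n := fun n => lt_trans ht (hsRt n)
  have hsRtend : Tendsto sR atTop (𝓝 t) := by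
    rw [hsR]
    have h2 := tendsto_const_nhds (x := t) (f := atTop (α := ℕ)) |>.add
      tendsto_one_div_add_atTop_nhds_zero_nat
    simpa using h2
  have hsL0 : ∀ n : ℕ, 0 < sL n := by
    intro n
    show 0 < t - t/((n:ℝ)+2)
    have h1 : t/((n:ℝ)+2) ≤ t/2 := by
      apply div_le_div_of_nonneg_left ht.le (by norm_num)
      linarith [Nat.cast_nonneg (α := ℝ) n]
    linarith
  have hsLt : ∀ n : ℕ, sL n < t := by
    intro n
    show t - t/((n:ℝ)+2) < t
    have : (0:ℝ) < t/((n:ℝ)+2) := by positivity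
    linarith
  have hsLmono : Monotone sL := by
    intro a b hab
    show t - t/((a:ℝ)+2) ≤ t - t/((b:ℝ)+2)
    have h1 : t/((b:ℝ)+2) ≤ t/((a:ℝ)+2) := by
      apply div_le_div_of_nonneg_left ht.le (by positivity)
      have : (a:ℝ) ≤ b := by exact_mod_cast hab
      linarith
    linarith
  have hsLtend : Tendsto sL atTop (𝓝 t) := by
    rw [hsL]
    have h1 : Tendsto (fun n : ℕ => t/((n:ℝ)+2)) atTop (𝓝 0) :=
      Tendsto.div_atTop tendsto_const_nhds
        (tendsto_atTop_add_const_right atTop 2 tendsto_natCast_atTop_atTop)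
    have h2 := tendsto_const_nhds (x := t) (f := atTop (α := ℕ)) |>.sub h1
    simpa using h2
  -- pointwise convergence from the right, for every x
  have hRlim : ∀ x : EuclideanSpace ℝ (Fin d),
      Tendsto (fun n => F (sR n) x) atTop (𝓝 (F t x)) := by
    intro x
    have hmonoSet : Monotone fun n => BSet O W D x (sR n) := by
      intro a b hab
      apply BSet_anti
      show t + 1/((b:ℝ)+1) ≤ t + 1/((a:ℝ)+1)
      have h1 : (1:ℝ)/((b:ℝ)+1) ≤ 1/((a:ℝ)+1) := by
        apply one_div_le_one_div_of_le (by positivity)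
        have : (a:ℝ) ≤ b := by exact_mod_cast hab
        linarith
      linarith
    have hu := tendsto_measure_iUnion_atTop (μ := ν) hmonoSet
    have hUeq : ν (⋃ n, BSet O W D x (sR n)) = F t x := by
      apply measure_congr
      rw [Filter.eventuallyEq_set]
      have h1 : ∀ᵐ p ∂ν, Continuous fun u => W u p.1 := ae_prod_fst hWcont
      have h2 : ∀ᵐ p ∂ν, GoodD D p.2 ∧ Napprox D t p.2 ∧ ∀ n, Napprox D (sR n) p.2 :=
        ae_prod_snd (hDpath'.and ((ae_Napprox hDmeas hDpath' hDstat ht).and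
          (ae_all_iff.2 fun n => ae_Napprox hDmeas hDpath' hDstat (hsR0 n))))
      filter_upwards [h1, h2] with p hc hp2
      obtain ⟨hgd, hNt, hNsR⟩ := hp2
      constructor
      · rintro hmem
        obtain ⟨n, hn⟩ := mem_iUnion.1 hmem
        exact BSet_anti (hsRt n).le hn
      · intro hmem
        have hlt : D t p.2 < tau O W x p.1 :=
          (mem_BSet_iff hO hOc hc hgd hNt ht).1 hmem
        have hDto : Tendsto (fun n => D (sR n) p.2) atTop (𝓝 (D t p.2)) := by
          have hcw := hgd.2.2 t ht.le
          rw [ContinuousWithinAt] at hcw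
          refine hcw.comp ?_
          rw [tendsto_nhdsWithin_iff]
          exact ⟨hsRtend, Filter.Eventually.of_forall fun n => (hsRt n).le⟩
        obtain ⟨n, hn⟩ := (hDto.eventually (eventually_lt_nhds hlt)).exists
        exact mem_iUnion.2 ⟨n, (mem_BSet_iff hO hOc hc hgd (hNsR n) (hsR0 n)).2 hn⟩
    rw [hUeq] at hu
    have : (fun n => F (sR n) x) = ν ∘ fun n => BSet O W D x (sR n) := rfl
    rw [this]
    exact hu
  -- pointwise convergence from the left, for a.e. x
  have hLdef := main_defect μ₁ μ₂ hO hObd hOc hWmeas hWcont hDmeas hDpath' hDstat ht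
    hsL0 hsLtend
  have hLlim : ∀ᵐ x ∂(volume : Measure (EuclideanSpace ℝ (Fin d))),
      Tendsto (fun n => F (sL n) x) atTop (𝓝 (F t x)) := by
    filter_upwards [hLdef] with x hx
    have hanti : Antitone fun n => BSet O W D x (sL n) := fun a b hab =>
      BSet_anti (hsLmono hab)
    have hi := tendsto_measure_iInter_atTop (μ := ν)
      (fun n => (measurableSet_BSet hWmeas hDmeas x (sL n)).nullMeasurableSet) hanti
      ⟨0, measure_ne_top ν _⟩
    have hsub2 : BSet O W D x t ⊆ ⋂ n, BSet O W D x (sL n) :=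
      subset_iInter fun n => BSet_anti (hsLt n).le
    have hsplit : ν (⋂ n, BSet O W D x (sL n)) = F t x := by
      refine le_antisymm ?_ (measure_mono hsub2)
      calc ν (⋂ n, BSet O W D x (sL n))
          = ν (BSet O W D x t ∪ ((⋂ n, BSet O W D x (sL n)) \ BSet O W D x t)) := by
            rw [union_diff_cancel hsub2]
      _ ≤ ν (BSet O W D x t) + ν ((⋂ n, BSet O W D x (sL n)) \ BSet O W D x t) :=
            measure_union_le _ _
      _ = F t x := by rw [hx, add_zero]
    rw [hsplit] at hi
    have : (fun n => F (sL n) x) = ν ∘ fun n => BSet O W D x (sL n) := rfl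
    rw [this]
    exact hi
  -- limits of Q along the two sequences
  have hQR : Tendsto (fun n => Q (sR n)) atTop (𝓝 (Q t)) := by
    have heq : ∀ n, Q (sR n) = ∫ x in O, (F (sR n) x).toReal := fun n => hQF _ (hsR0 n)
    simp only [heq]
    rw [hQF t ht]
    apply tendsto_integral_of_dominated_convergence (fun _ => (1:ℝ))
    · exact fun n => ((hFmeas (sR n)).ennreal_toReal).aestronglyMeasurable
    · exact integrable_const 1
    · intro n
      filter_upwards with x
      rw [Real.norm_eq_abs, abs_of_nonneg ENNReal.toReal_nonneg]
      exact hFtoReal_le _ x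
    · filter_upwards with x
      exact (ENNReal.tendsto_toReal (hFne t x)).comp (hRlim x)
  have hQL : Tendsto (fun n => Q (sL n)) atTop (𝓝 (Q t)) := by
    have heq : ∀ n, Q (sL n) = ∫ x in O, (F (sL n) x).toReal := fun n => hQF _ (hsL0 n)
    simp only [heq]
    rw [hQF t ht]
    apply tendsto_integral_of_dominated_convergence (fun _ => (1:ℝ))
    · exact fun n => ((hFmeas (sL n)).ennreal_toReal).aestronglyMeasurable
    · exact integrable_const 1
    · intro n
      filter_upwards with x
      rw [Real.norm_eq_abs, abs_of_nonneg ENNReal.toReal_nonneg]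
      exact hFtoReal_le _ x
    · have := ae_restrict_of_ae (μ := (volume : Measure (EuclideanSpace ℝ (Fin d))))
        (s := O) hLlim
      filter_upwards [this] with x hx
      exact (ENNReal.tendsto_toReal (hFne t x)).comp hx
  -- epsilon-delta argument
  rw [Metric.continuousWithinAt_iff]
  intro ε hε
  obtain ⟨n₁, hn₁⟩ := (Metric.tendsto_atTop.1 hQR ε hε)
  obtain ⟨n₂, hn₂⟩ := (Metric.tendsto_atTop.1 hQL ε hε)
  have hd1 := hn₁ n₁ (le_refl _)
  have hd2 := hn₂ n₂ (le_refl _)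
  refine ⟨min (1/(n₁+1)) (t/(n₂+2)), by positivity, ?_⟩
  intro s hsmem hdist
  have hs : 0 < s := hsmem
  rw [Real.dist_eq] at hdist
  rw [Real.dist_eq]
  rcases le_or_gt t s with hts | hts
  · -- right side
    have hsle : s ≤ sR n₁ := by
      have h1 : |s - t| < 1/(n₁+1) := lt_of_lt_of_le hdist (min_le_left _ _)
      rw [abs_of_nonneg (by linarith)] at h1
      show s ≤ t + 1/((n₁:ℝ)+1)
      linarith
    have h1 : Q (sR n₁) ≤ Q s := hQmono s (sR n₁) hs hsle
    have h2 : Q s ≤ Q t := hQmono t s ht hts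
    have h3 : Q (sR n₁) ≤ Q t := hQmono t (sR n₁) ht (hsRt n₁).le
    rw [Real.dist_eq, abs_of_nonpos (by linarith)] at hd1
    rw [abs_sub_lt_iff]
    constructor <;> linarith
  · -- left side
    have hsge : sL n₂ ≤ s := by
      have h1 : |s - t| < t/(n₂+2) := lt_of_lt_of_le hdist (min_le_right _ _)
      rw [abs_of_nonpos (by linarith)] at h1
      show t - t/((n₂:ℝ)+2) ≤ s
      linarith
    have h1 : Q s ≤ Q (sL n₂) := hQmono (sL n₂) s (hsL0 n₂) hsge
    have h2 : Q t ≤ Q s := hQmono s t hs hts.le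
    have h3 : Q t ≤ Q (sL n₂) := hQmono (sL n₂) t (hsL0 n₂) (hsLt n₂).le
    rw [Real.dist_eq, abs_of_nonneg (by linarith)] at hd2
    rw [abs_sub_lt_iff]
    constructor <;> linarith
end
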